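/- arXiv:2401.06677 — 7 statements merged into one kernel-verified Lean document; each statement's English description precedes it below -/
import Mathlib

section
/- Let f, g : ℝ → ℝ be C^∞, let u_- < u_+ satisfy g(u_-) = g(u_+) = 0, g'(u_-) < 0 < g'(u_+), and g(v) ≠ 0 for every v ∈ (u_-, u_+), and let σ ∈ ℝ satisfy σ > f'(v) for every v ∈ [u_-, u_+]. Then there is a unique ū ∈ C^1(ℝ;ℝ) with ū(0) = (u_- + u_+)/2 and ū'(x) = g(ū(x))/(f'(ū(x)) − σ) for all x ∈ ℝ; this ū is strictly increasing, takes values in (u_-, u_+), and satisfies ū(x) → u_- as x → −∞ and ū(x) → u_+ as x → +∞. Moreover, every ũ ∈ C^1(ℝ;ℝ) solving the same ODE on all of ℝ with ũ(x) → u_- as x → −∞ and ũ(x) → u_+ as x → +∞ equals ū(· + x_0) for some x_0 ∈ ℝ. -/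
open Filter Set
open scoped Topology

/-- **Existence, uniqueness and asymptotics of smooth monostable front profiles.**
For the scalar balance law `∂_t u + ∂_x (f(u)) = g(u)`, given consecutive non-degenerate
zeros `u₋ < u₊` of `g` with `g'(u₋) < 0 < g'(u₊)` and a speed `σ` with `σ > f'` on
`[u₋, u₊]`, there is a unique `C¹` profile `ū` with `ū 0 = (u₋+u₊)/2` solving
`ū' = g(ū)/(f'(ū) − σ)`; it is strictly increasing, takes values in `(u₋,u₊)`, connects
`u₋` at `−∞` to `u₊` at `+∞`, and every solution of the ODE with the same limits is a
translate of `ū`. -/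
theorem stmt_0
    (f g : ℝ → ℝ) (hf : ContDiff ℝ (⊤ : ℕ∞) f) (hg : ContDiff ℝ (⊤ : ℕ∞) g)
    (um up : ℝ) (hlt : um < up)
    (hgum : g um = 0) (hgup : g up = 0)
    (hg'um : deriv g um < 0) (hg'up : 0 < deriv g up)
    (hgne : ∀ v ∈ Set.Ioo um up, g v ≠ 0)
    (σ : ℝ) (hσ : ∀ v ∈ Set.Icc um up, deriv f v < σ) :
    ∃ ub : ℝ → ℝ,
      (ContDiff ℝ 1 ub ∧ ub 0 = (um + up) / 2 ∧
        ∀ x, deriv ub x = g (ub x) / (deriv f (ub x) - σ)) ∧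
      (∀ w : ℝ → ℝ, ContDiff ℝ 1 w → w 0 = (um + up) / 2 →
        (∀ x, deriv w x = g (w x) / (deriv f (w x) - σ)) → w = ub) ∧
      StrictMono ub ∧
      (∀ x, ub x ∈ Set.Ioo um up) ∧
      Tendsto ub atBot (nhds um) ∧
      Tendsto ub atTop (nhds up) ∧
      (∀ w : ℝ → ℝ, ContDiff ℝ 1 w →
        (∀ x, deriv w x = g (w x) / (deriv f (w x) - σ)) →
        Tendsto w atBot (nhds um) → Tendsto w atTop (nhds up) →
        ∃ x0 : ℝ, ∀ x, w x = ub (x + x0)) := by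
  classical
  set mid := (um + up) / 2 with hmiddef
  have hmmem : mid ∈ Set.Ioo um up := ⟨by rw [hmiddef]; linarith, by rw [hmiddef]; linarith⟩
  -- continuity of the various derivatives
  have hdfc : Continuous (deriv f) := (contDiff_infty_iff_deriv.mp hf).2.continuous
  have hdgc : Continuous (deriv g) := (contDiff_infty_iff_deriv.mp hg).2.continuous
  have hgc : Continuous g := hg.continuous
  have hgdiff : Differentiable ℝ g := (contDiff_infty_iff_deriv.mp hg).1
  -- positive lower bound for σ - f' on [um, up]
  obtain ⟨v0, hv0, hv0min⟩ := isCompact_Icc.exists_isMinOn (Set.nonempty_Icc.2 hlt.le)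
    ((continuous_const.sub hdfc).continuousOn : ContinuousOn (fun v => σ - deriv f v) (Set.Icc um up))
  set a := σ - deriv f v0 with hadef
  have hapos : 0 < a := sub_pos.2 (hσ v0 hv0)
  have halow : ∀ v ∈ Set.Icc um up, a ≤ σ - deriv f v := fun v hv => isMinOn_iff.mp hv0min v hv
  -- upper bound M for |g'| on [um, up], hence Lipschitz bounds on g
  obtain ⟨v1, hv1, hv1max⟩ := isCompact_Icc.exists_isMaxOn (Set.nonempty_Icc.2 hlt.le)
    ((hdgc.abs).continuousOn : ContinuousOn (fun v => |deriv g v|) (Set.Icc um up))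
  set M := |deriv g v1| + 1 with hMdef
  have hMpos : 0 < M := by positivity
  have hMbd : ∀ v ∈ Set.Icc um up, |deriv g v| ≤ M := fun v hv =>
    le_trans (isMaxOn_iff.mp hv1max v hv) (by linarith)
  have hgbd : ∀ v ∈ Set.Icc um up, |g v| ≤ M * (v - um) ∧ |g v| ≤ M * (up - v) := by
    intro v hv
    have hdiff : ∀ x ∈ Set.Icc um up, DifferentiableAt ℝ g x := fun x _ => hgdiff x
    have hbd : ∀ x ∈ Set.Icc um up, ‖deriv g x‖ ≤ M := fun x hx => hMbd x hx
    constructor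
    · have h := Convex.norm_image_sub_le_of_norm_deriv_le hdiff hbd (convex_Icc um up)
        (Set.left_mem_Icc.2 hlt.le) hv
      rw [hgum, sub_zero, Real.norm_eq_abs, Real.norm_eq_abs] at h
      calc |g v| ≤ M * |v - um| := h
        _ = M * (v - um) := by rw [abs_of_nonneg (by linarith [hv.1])]
    · have h := Convex.norm_image_sub_le_of_norm_deriv_le hdiff hbd (convex_Icc um up)
        (Set.right_mem_Icc.2 hlt.le) hv
      rw [hgup, sub_zero, Real.norm_eq_abs, Real.norm_eq_abs, abs_sub_comm] at h
      calc |g v| ≤ M * |up - v| := h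
        _ = M * (up - v) := by rw [abs_of_nonneg (by linarith [hv.2])]
  -- g is negative on (um, up)
  have hgneg : ∀ v ∈ Set.Ioo um up, g v < 0 := by
    have hslope : Tendsto (slope g up) (𝓝[≠] up) (𝓝 (deriv g up)) :=
      hasDerivAt_iff_tendsto_slope.mp (hgdiff up).hasDerivAt
    have h1 : ∀ᶠ v in 𝓝[<] up, 0 < slope g up v :=
      (hslope.mono_left (nhdsWithin_mono _ fun x hx => ne_of_lt hx)).eventually
        (eventually_gt_nhds hg'up)
    have h2 : ∀ᶠ v in 𝓝[<] up, v ∈ Set.Ioo um up :=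
      Ioo_mem_nhdsLT_of_mem ⟨hlt, le_refl up⟩
    obtain ⟨v₂, hv₂pos, hv₂mem⟩ := (h1.and h2).exists
    have hgv₂ : g v₂ < 0 := by
      have hs : slope g up v₂ = g v₂ / (v₂ - up) := by
        rw [slope_def_field, hgup, sub_zero]
      rw [hs] at hv₂pos
      have hneg : v₂ - up < 0 := sub_neg.2 hv₂mem.2
      by_contra hge
      push_neg at hge
      have : g v₂ / (v₂ - up) ≤ 0 := div_nonpos_of_nonneg_of_nonpos hge hneg.le
      linarith
    intro v hv
    by_contra hge
    push_neg at hge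
    have hgpos : 0 < g v := lt_of_le_of_ne hge (Ne.symm (hgne v hv))
    have hz : (0 : ℝ) ∈ Set.uIcc (g v₂) (g v) := Set.mem_uIcc.2 (Or.inl ⟨hgv₂.le, hgpos.le⟩)
    obtain ⟨c, hc, hc0⟩ := intermediate_value_uIcc (hgc.continuousOn : ContinuousOn g (Set.uIcc v₂ v)) hz
    exact hgne c (Set.ordConnected_Ioo.uIcc_subset hv₂mem hv hc) hc0
  -- the integrand q and its primitive F
  set q := fun v => (deriv f v - σ) / g v with hqdef
  have hne : ∀ v ∈ Set.Ioo um up, deriv f v - σ ≠ 0 :=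
    fun v hv => ne_of_lt (sub_neg.2 (hσ v (Set.Ioo_subset_Icc_self hv)))
  have hqpos : ∀ v ∈ Set.Ioo um up, 0 < q v := fun v hv =>
    div_pos_of_neg_of_neg (sub_neg.2 (hσ v (Set.Ioo_subset_Icc_self hv))) (hgneg v hv)
  have hqcont : ContinuousOn q (Set.Ioo um up) :=
    (hdfc.continuousOn.sub continuousOn_const).div hgc.continuousOn (fun v hv => hgne v hv)
  have hintegr : ∀ v ∈ Set.Ioo um up, ∀ v' ∈ Set.Ioo um up, IntervalIntegrable q MeasureTheory.volume v v' :=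
    fun v hv v' hv' => (hqcont.mono (Set.ordConnected_Ioo.uIcc_subset hv hv')).intervalIntegrable
  set F := fun v => ∫ t in mid..v, q t with hFdef
  have hFmid : F mid = 0 := intervalIntegral.integral_same
  have hFderiv : ∀ v ∈ Set.Ioo um up, HasDerivAt F (q v) v := fun v hv =>
    intervalIntegral.integral_hasDerivAt_right (hintegr mid hmmem v hv)
      (hqcont.stronglyMeasurableAtFilter isOpen_Ioo v hv)
      (hqcont.continuousAt (isOpen_Ioo.mem_nhds hv))
  have hFcont : ContinuousOn F (Set.Ioo um up) :=
    fun v hv => ((hFderiv v hv).continuousAt).continuousWithinAt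
  have hFmono : StrictMonoOn F (Set.Ioo um up) := by
    apply strictMonoOn_of_deriv_pos (convex_Ioo um up) hFcont
    rw [interior_Ioo]
    intro v hv
    rw [(hFderiv v hv).deriv]
    exact hqpos v hv
  -- lower bounds on q
  have hqlow1 : ∀ v ∈ Set.Ioo um up, a / M * (v - um)⁻¹ ≤ q v := by
    intro v hv
    have hvum : 0 < v - um := sub_pos.2 hv.1
    have hgn : 0 < -g v := neg_pos.2 (hgneg v hv)
    have hbd : -g v ≤ M * (v - um) := by
      have := (hgbd v (Set.Ioo_subset_Icc_self hv)).1
      rw [abs_of_neg (hgneg v hv)] at this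
      exact this
    have hq : q v = (σ - deriv f v) / (-g v) := by
      rw [hqdef, div_neg, ← neg_div, neg_sub]
    rw [hq]
    have h1 : a / M * (v - um)⁻¹ = a / (M * (v - um)) := by
      rw [division_def, division_def, mul_assoc, ← mul_inv]
    rw [h1]
    exact div_le_div₀ (by linarith [halow v (Set.Ioo_subset_Icc_self hv)])
      (halow v (Set.Ioo_subset_Icc_self hv)) hgn hbd
  have hqlow2 : ∀ v ∈ Set.Ioo um up, a / M * (up - v)⁻¹ ≤ q v := by
    intro v hv
    have hvup : 0 < up - v := sub_pos.2 hv.2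
    have hgn : 0 < -g v := neg_pos.2 (hgneg v hv)
    have hbd : -g v ≤ M * (up - v) := by
      have := (hgbd v (Set.Ioo_subset_Icc_self hv)).2
      rw [abs_of_neg (hgneg v hv)] at this
      exact this
    have hq : q v = (σ - deriv f v) / (-g v) := by
      rw [hqdef, div_neg, ← neg_div, neg_sub]
    rw [hq]
    have h1 : a / M * (up - v)⁻¹ = a / (M * (up - v)) := by
      rw [division_def, division_def, mul_assoc, ← mul_inv]
    rw [h1]
    exact div_le_div₀ (by linarith [halow v (Set.Ioo_subset_Icc_self hv)])
      (halow v (Set.Ioo_subset_Icc_self hv)) hgn hbd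
  -- divergence of F at the endpoints
  have hFbot : Tendsto F (𝓝[>] um) atBot := by
    have key : ∀ v ∈ Set.Ioo um mid, F v ≤ a / M * (Real.log (v - um) - Real.log (mid - um)) := by
      intro v hv
      have hvIoo : v ∈ Set.Ioo um up := ⟨hv.1, hv.2.trans hmmem.2⟩
      have hle : v ≤ mid := hv.2.le
      have hFv : F v = -∫ t in v..mid, q t := by
        rw [hFdef]; exact intervalIntegral.integral_symm v mid
      have hint1 : IntervalIntegrable (fun t => a / M * (t - um)⁻¹) MeasureTheory.volume v mid := by
        apply ContinuousOn.intervalIntegrable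
        apply ContinuousOn.mul continuousOn_const
        apply ContinuousOn.inv₀ (continuousOn_id.sub continuousOn_const)
        intro t ht
        rw [Set.uIcc_of_le hle] at ht
        have : um < t := lt_of_lt_of_le hv.1 ht.1
        simpa using ne_of_gt (sub_pos.2 this)
      have hint2 : IntervalIntegrable q MeasureTheory.volume v mid := hintegr v hvIoo mid hmmem
      have hmono : (∫ t in v..mid, a / M * (t - um)⁻¹) ≤ ∫ t in v..mid, q t := by
        apply intervalIntegral.integral_mono_on hle hint1 hint2
        intro t ht
        exact hqlow1 t ⟨lt_of_lt_of_le hv.1 ht.1, lt_of_le_of_lt ht.2 hmmem.2⟩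
      have hcomp : (∫ t in v..mid, a / M * (t - um)⁻¹)
          = a / M * (Real.log (mid - um) - Real.log (v - um)) := by
        rw [intervalIntegral.integral_const_mul]
        rw [show (∫ t in v..mid, (t - um)⁻¹) = ∫ t in v - um..mid - um, t⁻¹ from
          intervalIntegral.integral_comp_sub_right (fun t => t⁻¹) um]
        rw [integral_inv_of_pos (sub_pos.2 hv.1) (sub_pos.2 hmmem.1)]
        rw [Real.log_div (ne_of_gt (sub_pos.2 hmmem.1)) (ne_of_gt (sub_pos.2 hv.1))]
      have hring : a / M * (Real.log (v - um) - Real.log (mid - um))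
          = -(a / M * (Real.log (mid - um) - Real.log (v - um))) := by ring
      rw [hring]
      rw [hFv]
      rw [hcomp] at hmono
      linarith
    have hlog : Tendsto (fun v => a / M * (Real.log (v - um) - Real.log (mid - um))) (𝓝[>] um) atBot := by
      have h1 : Tendsto (fun v : ℝ => v - um) (𝓝[>] um) (𝓝[>] 0) := by
        apply tendsto_nhdsWithin_of_tendsto_nhds_of_eventually_within
        · exact ((continuous_id.sub continuous_const).tendsto' um 0 (sub_self um)).mono_left
            nhdsWithin_le_nhds
        · exact eventually_mem_nhdsWithin.mono fun v hv => Set.mem_Ioi.2 (sub_pos.2 hv)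
      have h2 : Tendsto (fun v => Real.log (v - um)) (𝓝[>] um) atBot :=
        Real.tendsto_log_nhdsGT_zero.comp h1
      have h3 : Tendsto (fun v => Real.log (v - um) - Real.log (mid - um)) (𝓝[>] um) atBot :=
        tendsto_atBot_add_const_right _ (-Real.log (mid - um)) h2
      exact h3.const_mul_atBot (div_pos hapos hMpos)
    apply tendsto_atBot_mono' _ _ hlog
    filter_upwards [Ioo_mem_nhdsGT_of_mem (Set.left_mem_Ico.2 hmmem.1)] with v hv
    exact key v hv
  have hFtop : Tendsto F (𝓝[<] up) atTop := by
    have key : ∀ v ∈ Set.Ioo mid up, a / M * (Real.log (up - mid) - Real.log (up - v)) ≤ F v := by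
      intro v hv
      have hvIoo : v ∈ Set.Ioo um up := ⟨hmmem.1.trans hv.1, hv.2⟩
      have hle : mid ≤ v := hv.1.le
      have hint1 : IntervalIntegrable (fun t => a / M * (up - t)⁻¹) MeasureTheory.volume mid v := by
        apply ContinuousOn.intervalIntegrable
        apply ContinuousOn.mul continuousOn_const
        apply ContinuousOn.inv₀ (continuousOn_const.sub continuousOn_id)
        intro t ht
        rw [Set.uIcc_of_le hle] at ht
        have : t < up := lt_of_le_of_lt ht.2 hv.2
        simpa using ne_of_gt (sub_pos.2 this)
      have hint2 : IntervalIntegrable q MeasureTheory.volume mid v := hintegr mid hmmem v hvIoo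
      have hmono : (∫ t in mid..v, a / M * (up - t)⁻¹) ≤ ∫ t in mid..v, q t := by
        apply intervalIntegral.integral_mono_on hle hint1 hint2
        intro t ht
        exact hqlow2 t ⟨lt_of_lt_of_le hmmem.1 ht.1, lt_of_le_of_lt ht.2 hv.2⟩
      have hcomp : (∫ t in mid..v, a / M * (up - t)⁻¹)
          = a / M * (Real.log (up - mid) - Real.log (up - v)) := by
        rw [intervalIntegral.integral_const_mul]
        rw [show (∫ t in mid..v, (up - t)⁻¹) = ∫ t in up - v..up - mid, t⁻¹ from
          intervalIntegral.integral_comp_sub_left (fun t => t⁻¹) up]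
        rw [integral_inv_of_pos (sub_pos.2 hv.2) (sub_pos.2 hmmem.2)]
        rw [Real.log_div (ne_of_gt (sub_pos.2 hmmem.2)) (ne_of_gt (sub_pos.2 hv.2))]
      rw [hcomp] at hmono
      exact hmono
    have hlog : Tendsto (fun v => a / M * (Real.log (up - mid) - Real.log (up - v))) (𝓝[<] up) atTop := by
      have h1 : Tendsto (fun v : ℝ => up - v) (𝓝[<] up) (𝓝[>] 0) := by
        apply tendsto_nhdsWithin_of_tendsto_nhds_of_eventually_within
        · exact ((continuous_const.sub continuous_id).tendsto' up 0 (sub_self up)).mono_left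
            nhdsWithin_le_nhds
        · exact eventually_mem_nhdsWithin.mono fun v hv => Set.mem_Ioi.2 (sub_pos.2 hv)
      have h2 : Tendsto (fun v => Real.log (up - v)) (𝓝[<] up) atBot :=
        Real.tendsto_log_nhdsGT_zero.comp h1
      have h3 : Tendsto (fun v => -(Real.log (up - v)) + Real.log (up - mid)) (𝓝[<] up) atTop := by
        apply tendsto_atTop_add_const_right
        exact tendsto_neg_atTop_iff.mpr h2
      have h4 := h3.const_mul_atTop (div_pos hapos hMpos)
      refine h4.congr fun v => ?_
      ring
    apply tendsto_atTop_mono' _ _ hlog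
    filter_upwards [Ioo_mem_nhdsLT_of_mem (Set.right_mem_Ioc.2 hmmem.2)] with v hv
    exact key v hv
  -- surjectivity of F : (um, up) → ℝ, definition of ub as the inverse
  have hFsurj : ∀ y : ℝ, ∃ v, v ∈ Set.Ioo um up ∧ F v = y := by
    intro y
    have e1 : ∀ᶠ v in 𝓝[>] um, F v < y := hFbot.eventually (eventually_lt_atBot y)
    have e2 : ∀ᶠ v in 𝓝[>] um, v ∈ Set.Ioo um up := Ioo_mem_nhdsGT_of_mem ⟨le_refl um, hlt⟩
    obtain ⟨v₁, hv₁y, hv₁⟩ := (e1.and e2).exists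
    have e3 : ∀ᶠ v in 𝓝[<] up, y < F v := hFtop.eventually (eventually_gt_atTop y)
    have e4 : ∀ᶠ v in 𝓝[<] up, v ∈ Set.Ioo um up := Ioo_mem_nhdsLT_of_mem ⟨hlt, le_refl up⟩
    obtain ⟨v₂, hv₂y, hv₂⟩ := (e3.and e4).exists
    have hsub : Set.uIcc v₁ v₂ ⊆ Set.Ioo um up := Set.ordConnected_Ioo.uIcc_subset hv₁ hv₂
    have hy : y ∈ Set.uIcc (F v₁) (F v₂) := Set.mem_uIcc.2 (Or.inl ⟨hv₁y.le, hv₂y.le⟩)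
    obtain ⟨v, hv, hFv⟩ := intermediate_value_uIcc (hFcont.mono hsub) hy
    exact ⟨v, hsub hv, hFv⟩
  choose ub hubmem hubF using hFsurj
  -- basic properties of ub
  have hubsm : StrictMono ub := by
    intro x y hxy
    have : F (ub x) < F (ub y) := by rw [hubF x, hubF y]; exact hxy
    exact (hFmono.lt_iff_lt (hubmem x) (hubmem y)).mp this
  have hubcont : Continuous ub := by
    rw [continuous_iff_continuousAt]
    intro x
    unfold ContinuousAt
    rw [tendsto_order]
    constructor
    · intro l hl
      set l' := (max l um + ub x) / 2 with hl'def
      have h1 : max l um < ub x := max_lt hl (hubmem x).1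
      have hl'mem : l' ∈ Set.Ioo um up := by
        constructor
        · have := le_max_right l um
          rw [hl'def]
          have := (hubmem x).1
          linarith [le_max_right l um]
        · rw [hl'def]
          have := (hubmem x).2
          linarith [h1]
      have hl'lt : l' < ub x := by rw [hl'def]; linarith
      have hll' : l < l' := by
        rw [hl'def]
        linarith [le_max_left l um]
      have hFl' : F l' < x := by
        have := hFmono hl'mem (hubmem x) hl'lt
        rwa [hubF x] at this
      filter_upwards [Ioi_mem_nhds hFl'] with y hy
      have hyF : F l' < F (ub y) := by rw [hubF y]; exact hy
      exact lt_trans hll' ((hFmono.lt_iff_lt hl'mem (hubmem y)).mp hyF)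
    · intro u' hu'
      set u₂ := (ub x + min u' up) / 2 with hu₂def
      have h1 : ub x < min u' up := lt_min hu' (hubmem x).2
      have hu₂mem : u₂ ∈ Set.Ioo um up := by
        constructor
        · rw [hu₂def]
          have := (hubmem x).1
          linarith [h1]
        · rw [hu₂def]
          linarith [min_le_right u' up, h1]
      have hu₂gt : ub x < u₂ := by rw [hu₂def]; linarith
      have hu₂lt : u₂ < u' := by
        rw [hu₂def]
        linarith [min_le_left u' up]
      have hFu₂ : x < F u₂ := by
        have := hFmono (hubmem x) hu₂mem hu₂gt
        rwa [hubF x] at this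
      filter_upwards [Iio_mem_nhds hFu₂] with y hy
      have hyF : F (ub y) < F u₂ := by rw [hubF y]; exact hy
      exact lt_trans ((hFmono.lt_iff_lt (hubmem y) hu₂mem).mp hyF) hu₂lt
  have hubderiv : ∀ x, HasDerivAt ub (g (ub x) / (deriv f (ub x) - σ)) x := by
    intro x
    have h1 : HasDerivAt ub (q (ub x))⁻¹ x :=
      HasDerivAt.of_local_left_inverse hubcont.continuousAt (hFderiv (ub x) (hubmem x))
        (ne_of_gt (hqpos _ (hubmem x))) (Filter.Eventually.of_forall hubF)
    have h2 : (q (ub x))⁻¹ = g (ub x) / (deriv f (ub x) - σ) := by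
      rw [hqdef, inv_div]
    rwa [h2] at h1
  have hubC1 : ContDiff ℝ 1 ub := by
    rw [contDiff_one_iff_deriv]
    refine ⟨fun x => (hubderiv x).differentiableAt, ?_⟩
    have hde : deriv ub = fun x => g (ub x) / (deriv f (ub x) - σ) :=
      funext fun x => (hubderiv x).deriv
    rw [hde]
    exact (hgc.comp hubcont).div ((hdfc.comp hubcont).sub continuous_const)
      (fun x => hne _ (hubmem x))
  have hubtop : Tendsto ub atTop (𝓝 up) := by
    rw [tendsto_order]
    constructor
    · intro l hl
      set l' := (max l um + up) / 2 with hl'def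
      have h1 : max l um < up := max_lt hl hlt
      have hl'mem : l' ∈ Set.Ioo um up := by
        constructor
        · rw [hl'def]; linarith [le_max_right l um]
        · rw [hl'def]; linarith
      have hl'gt : l < l' := by rw [hl'def]; linarith [le_max_left l um]
      filter_upwards [Filter.eventually_ge_atTop (F l')] with x hx
      have : F l' ≤ F (ub x) := by rw [hubF x]; exact hx
      exact lt_of_lt_of_le hl'gt ((hFmono.le_iff_le hl'mem (hubmem x)).mp this)
    · intro u' hu'
      exact Filter.Eventually.of_forall fun x => lt_trans (hubmem x).2 hu'
  have hubbot : Tendsto ub atBot (𝓝 um) := by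
    rw [tendsto_order]
    constructor
    · intro l hl
      exact Filter.Eventually.of_forall fun x => lt_trans hl (hubmem x).1
    · intro u' hu'
      set u₂ := (um + min u' up) / 2 with hu₂def
      have h1 : um < min u' up := lt_min hu' hlt
      have hu₂mem : u₂ ∈ Set.Ioo um up := by
        constructor
        · rw [hu₂def]; linarith
        · rw [hu₂def]; linarith [min_le_right u' up]
      have hu₂lt : u₂ < u' := by rw [hu₂def]; linarith [min_le_left u' up]
      filter_upwards [Filter.eventually_le_atBot (F u₂)] with x hx
      have : F (ub x) ≤ F u₂ := by rw [hubF x]; exact hx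
      exact lt_of_le_of_lt ((hFmono.le_iff_le (hubmem x) hu₂mem).mp this) hu₂lt
  -- the key rigidity lemma: every solution through the strip is a translate of ub
  have hkey : ∀ w : ℝ → ℝ, ContDiff ℝ 1 w → (∀ x, deriv w x = g (w x) / (deriv f (w x) - σ)) →
      ∀ x₁, w x₁ ∈ Set.Ioo um up → ∀ x, w x = ub (x + (F (w x₁) - x₁)) := by
    intro w hw hwode x₁ hx₁
    have hwc : Continuous w := hw.continuous
    have hwd : ∀ x, HasDerivAt w (g (w x) / (deriv f (w x) - σ)) x := by
      intro x
      have := ((hw.differentiable one_ne_zero) x).hasDerivAt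
      rwa [hwode x] at this
    have hconst : ∀ s t : ℝ, s ≤ t → (∀ r ∈ Set.Icc s t, w r ∈ Set.Ioo um up) →
        F (w t) - t = F (w s) - s := by
      intro s t hst hmem
      have hd : ∀ r ∈ Set.Icc s t, HasDerivAt (fun r => F (w r) - r) 0 r := by
        intro r hr
        have h1 : HasDerivAt (fun r => F (w r)) (q (w r) * (g (w r) / (deriv f (w r) - σ))) r :=
          (hFderiv (w r) (hmem r hr)).comp r (hwd r)
        have h2 : q (w r) * (g (w r) / (deriv f (w r) - σ)) = 1 := by
          rw [hqdef, div_mul_div_comm, mul_comm (g (w r))]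
          exact div_self (mul_ne_zero (hne _ (hmem r hr)) (hgne _ (hmem r hr)))
        rw [h2] at h1
        have h3 := h1.sub (hasDerivAt_id r)
        rw [sub_self] at h3; exact h3
      have hcont : ContinuousOn (fun r => F (w r) - r) (Set.Icc s t) :=
        fun r hr => (hd r hr).continuousAt.continuousWithinAt
      have := constant_of_has_deriv_right_zero hcont
        (fun r hr => (hd r (Set.mem_Icc_of_Ico hr)).hasDerivWithinAt) t (Set.right_mem_Icc.2 hst)
      exact this
    have hforward : ∀ t, x₁ ≤ t → w t ∈ Set.Ioo um up ∧ F (w t) - t = F (w x₁) - x₁ := by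
      set T := {t : ℝ | x₁ ≤ t ∧ w t ∉ Set.Ioo um up} with hTdef
      have hTempty : T = ∅ := by
        by_contra hne'
        have hTne : T.Nonempty := Set.nonempty_iff_ne_empty.mpr hne'
        have hTclosed : IsClosed T := by
          have : T = Set.Ici x₁ ∩ w ⁻¹' (Set.Ioo um up)ᶜ := rfl
          rw [this]
          exact isClosed_Ici.inter ((isOpen_Ioo.preimage hwc).isClosed_compl)
        have hbdd : BddBelow T := ⟨x₁, fun t ht => ht.1⟩
        set b := sInf T with hbdef
        have hbT : b ∈ T := hTclosed.csInf_mem hTne hbdd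
        have hx₁b : x₁ < b := by
          rcases lt_or_eq_of_le (le_csInf hTne fun t ht => ht.1) with h | h
          · exact h
          · have hxT : x₁ ∈ T := by rw [show x₁ = b from h.trans hbdef.symm]; exact hbT
            exact absurd hx₁ hxT.2
        have hIco : ∀ t ∈ Set.Ico x₁ b, w t ∈ Set.Ioo um up := by
          intro t ht
          by_contra hnot
          exact notMem_of_lt_csInf ht.2 hbdd ⟨ht.1, hnot⟩
        have hphi : ∀ t ∈ Set.Ico x₁ b, F (w t) = (F (w x₁) - x₁) + t := by
          intro t ht
          have := hconst x₁ t ht.1 (fun r hr => hIco r ⟨hr.1, lt_of_le_of_lt hr.2 ht.2⟩)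
          linarith
        have hev : ∀ᶠ t in 𝓝[<] b, t ∈ Set.Ico x₁ b :=
          Ico_mem_nhdsLT_of_mem ⟨hx₁b, le_refl b⟩
        have hwb : w b ∈ Set.Icc um up := by
          have h1 : Tendsto w (𝓝[<] b) (𝓝 (w b)) := (hwc.tendsto b).mono_left nhdsWithin_le_nhds
          refine isClosed_Icc.mem_of_tendsto h1 ?_
          filter_upwards [hev] with t ht using Set.Ioo_subset_Icc_self (hIco t ht)
        have hlim : Tendsto (fun t => F (w t)) (𝓝[<] b) (𝓝 ((F (w x₁) - x₁) + b)) := by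
          have h2 : Tendsto (fun t : ℝ => (F (w x₁) - x₁) + t) (𝓝[<] b)
              (𝓝 ((F (w x₁) - x₁) + b)) :=
            ((continuous_const.add continuous_id).tendsto b).mono_left nhdsWithin_le_nhds
          exact h2.congr' (by filter_upwards [hev] with t ht using (hphi t ht).symm)
        have hcases : w b = um ∨ w b = up := by
          rcases eq_or_lt_of_le hwb.1 with h | h
          · exact Or.inl h.symm
          rcases eq_or_lt_of_le hwb.2 with h2 | h2
          · exact Or.inr h2
          · exact absurd ⟨h, h2⟩ hbT.2
        rcases hcases with hbum | hbup
        · have h3 : Tendsto w (𝓝[<] b) (𝓝[>] um) := by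
            apply tendsto_nhdsWithin_of_tendsto_nhds_of_eventually_within
            · exact hbum ▸ ((hwc.tendsto b).mono_left nhdsWithin_le_nhds)
            · filter_upwards [hev] with t ht using (hIco t ht).1
          exact not_tendsto_nhds_of_tendsto_atBot (hFbot.comp h3) _ hlim
        · have h3 : Tendsto w (𝓝[<] b) (𝓝[<] up) := by
            apply tendsto_nhdsWithin_of_tendsto_nhds_of_eventually_within
            · exact hbup ▸ ((hwc.tendsto b).mono_left nhdsWithin_le_nhds)
            · filter_upwards [hev] with t ht using (hIco t ht).2
          exact not_tendsto_nhds_of_tendsto_atTop (hFtop.comp h3) _ hlim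
      intro t ht
      have hIoo : ∀ r ∈ Set.Icc x₁ t, w r ∈ Set.Ioo um up := by
        intro r hr
        by_contra hnot
        have : r ∈ T := ⟨hr.1, hnot⟩
        rw [hTempty] at this
        exact this
      exact ⟨hIoo t (Set.right_mem_Icc.2 ht), hconst x₁ t ht hIoo⟩
    have hbackward : ∀ t, t ≤ x₁ → w t ∈ Set.Ioo um up ∧ F (w t) - t = F (w x₁) - x₁ := by
      set T := {t : ℝ | t ≤ x₁ ∧ w t ∉ Set.Ioo um up} with hTdef
      have hTempty : T = ∅ := by
        by_contra hne'
        have hTne : T.Nonempty := Set.nonempty_iff_ne_empty.mpr hne'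
        have hTclosed : IsClosed T := by
          have : T = Set.Iic x₁ ∩ w ⁻¹' (Set.Ioo um up)ᶜ := rfl
          rw [this]
          exact isClosed_Iic.inter ((isOpen_Ioo.preimage hwc).isClosed_compl)
        have hbdd : BddAbove T := ⟨x₁, fun t ht => ht.1⟩
        set b := sSup T with hbdef
        have hbT : b ∈ T := hTclosed.csSup_mem hTne hbdd
        have hx₁b : b < x₁ := by
          rcases lt_or_eq_of_le (csSup_le hTne fun t ht => ht.1) with h | h
          · exact h
          · have hxT : x₁ ∈ T := by rw [show x₁ = b from (hbdef.trans h).symm]; exact hbT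
            exact absurd hx₁ hxT.2
        have hIoc : ∀ t ∈ Set.Ioc b x₁, w t ∈ Set.Ioo um up := by
          intro t ht
          by_contra hnot
          exact notMem_of_csSup_lt ht.1 hbdd ⟨ht.2, hnot⟩
        have hphi : ∀ t ∈ Set.Ioc b x₁, F (w t) = (F (w x₁) - x₁) + t := by
          intro t ht
          have := hconst t x₁ ht.2 (fun r hr => hIoc r ⟨lt_of_lt_of_le ht.1 hr.1, hr.2⟩)
          linarith
        have hev : ∀ᶠ t in 𝓝[>] b, t ∈ Set.Ioc b x₁ :=
          Ioc_mem_nhdsGT_of_mem ⟨le_refl b, hx₁b⟩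
        have hwb : w b ∈ Set.Icc um up := by
          have h1 : Tendsto w (𝓝[>] b) (𝓝 (w b)) := (hwc.tendsto b).mono_left nhdsWithin_le_nhds
          refine isClosed_Icc.mem_of_tendsto h1 ?_
          filter_upwards [hev] with t ht using Set.Ioo_subset_Icc_self (hIoc t ht)
        have hlim : Tendsto (fun t => F (w t)) (𝓝[>] b) (𝓝 ((F (w x₁) - x₁) + b)) := by
          have h2 : Tendsto (fun t : ℝ => (F (w x₁) - x₁) + t) (𝓝[>] b)
              (𝓝 ((F (w x₁) - x₁) + b)) :=
            ((continuous_const.add continuous_id).tendsto b).mono_left nhdsWithin_le_nhds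
          exact h2.congr' (by filter_upwards [hev] with t ht using (hphi t ht).symm)
        have hcases : w b = um ∨ w b = up := by
          rcases eq_or_lt_of_le hwb.1 with h | h
          · exact Or.inl h.symm
          rcases eq_or_lt_of_le hwb.2 with h2 | h2
          · exact Or.inr h2
          · exact absurd ⟨h, h2⟩ hbT.2
        rcases hcases with hbum | hbup
        · have h3 : Tendsto w (𝓝[>] b) (𝓝[>] um) := by
            apply tendsto_nhdsWithin_of_tendsto_nhds_of_eventually_within
            · exact hbum ▸ ((hwc.tendsto b).mono_left nhdsWithin_le_nhds)
            · filter_upwards [hev] with t ht using (hIoc t ht).1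
          exact not_tendsto_nhds_of_tendsto_atBot (hFbot.comp h3) _ hlim
        · have h3 : Tendsto w (𝓝[>] b) (𝓝[<] up) := by
            apply tendsto_nhdsWithin_of_tendsto_nhds_of_eventually_within
            · exact hbup ▸ ((hwc.tendsto b).mono_left nhdsWithin_le_nhds)
            · filter_upwards [hev] with t ht using (hIoc t ht).2
          exact not_tendsto_nhds_of_tendsto_atTop (hFtop.comp h3) _ hlim
      intro t ht
      have hIoo : ∀ r ∈ Set.Icc t x₁, w r ∈ Set.Ioo um up := by
        intro r hr
        by_contra hnot
        have : r ∈ T := ⟨hr.2, hnot⟩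
        rw [hTempty] at this
        exact this
      have := hconst t x₁ ht hIoo
      exact ⟨hIoo t (Set.left_mem_Icc.2 ht), this.symm⟩
    intro x
    have hx : w x ∈ Set.Ioo um up ∧ F (w x) - x = F (w x₁) - x₁ := by
      rcases le_total x₁ x with hle | hle
      · exact hforward x hle
      · exact hbackward x hle
    have h1 : F (w x) = x + (F (w x₁) - x₁) := by linarith [hx.2]
    have h2 : F (ub (x + (F (w x₁) - x₁))) = x + (F (w x₁) - x₁) := hubF _
    exact hFmono.injOn hx.1 (hubmem _) (h1.trans h2.symm)
  -- assemble the statement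
  refine ⟨ub, ⟨hubC1, ?_, fun x => (hubderiv x).deriv⟩, ?_, hubsm, hubmem, hubbot, hubtop, ?_⟩
  · have h0 : F (ub 0) = F mid := by rw [hubF 0, hFmid]
    exact hFmono.injOn (hubmem 0) hmmem h0
  · intro w hw hw0 hwode
    funext x
    have hx₁ : w 0 ∈ Set.Ioo um up := by rw [hw0]; exact hmmem
    have hkx := hkey w hw hwode 0 hx₁ x
    rw [hkx]
    congr 1
    rw [hw0, hFmid]
    ring
  · intro w hw hwode hbot htop
    have h1 : ∀ᶠ x in atBot, w x < mid := hbot.eventually_lt_const hmmem.1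
    obtain ⟨xa, hxa⟩ := h1.exists
    have h2 : ∀ᶠ x in atTop, mid < w x := htop.eventually_const_lt hmmem.2
    obtain ⟨xb, hxb⟩ := h2.exists
    have hmem' : mid ∈ Set.uIcc (w xa) (w xb) := Set.mem_uIcc.2 (Or.inl ⟨hxa.le, hxb.le⟩)
    obtain ⟨x₁, _, hx₁⟩ := intermediate_value_uIcc
      (hw.continuous.continuousOn : ContinuousOn w (Set.uIcc xa xb)) hmem'
    have hx₁mem : w x₁ ∈ Set.Ioo um up := by rw [hx₁]; exact hmmem
    exact ⟨F (w x₁) - x₁, fun x => hkey w hw hwode x₁ hx₁mem x⟩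
end

section
/- (i) Let κ > 0 and h ∈ C^1(ℝ;ℝ); if e^{κx}·h(x) → a and e^{κx}·h'(x) → b as x → +∞ for some real a, b, then b = −κ·a. (ii) In the front setting, let u_0 ∈ C^1(ℝ;ℝ) be such that e^{κ⁺x}·(u_0 − ū)(x) → a and e^{κ⁺x}·(u_0 − ū)'(x) → b as x → +∞; assume that α⁺ := lim_{x→+∞} e^{κ⁺x}·ū'(x) exists with α⁺ ≠ 0 and that 1 − κ⁺·a/α⁺ > 0, and set ψ_∞ := (1/κ⁺)·ln(1 − κ⁺·a/α⁺). Then e^{κ⁺x}·(u_0(x) − ū(x − ψ_∞)) → 0 and e^{κ⁺x}·(u_0'(x) − ū'(x − ψ_∞)) → 0 as x → +∞. -/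
open Filter Set

/-- If `F` has derivative `D` everywhere, `F → a` at `+∞` and `D → L` at `+∞`, then `L = 0`. -/
lemma aux_deriv_lim_zero {F D : ℝ → ℝ} {a L : ℝ}
    (hF : ∀ x, HasDerivAt F (D x) x)
    (hFa : Tendsto F atTop (nhds a))
    (hD : Tendsto D atTop (nhds L)) : L = 0 := by
  have key : ∀ x : ℝ, ∃ c, c ∈ Ioo x (x + 1) ∧ D c = F (x + 1) - F x := by
    intro x
    obtain ⟨c, hc, hceq⟩ := exists_deriv_eq_slope F (by linarith : x < x + 1)
      (fun y _ => (hF y).continuousAt.continuousWithinAt)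
      (fun y _ => (hF y).differentiableAt.differentiableWithinAt)
    refine ⟨c, hc, ?_⟩
    have : deriv F c = D c := (hF c).deriv
    rw [← this, hceq]
    simp
  choose c hc hceq using key
  have hctop : Tendsto c atTop atTop :=
    tendsto_atTop_mono (fun x => (hc x).1.le) tendsto_id
  have h1 : Tendsto (fun x => D (c x)) atTop (nhds L) := hD.comp hctop
  have h2 : Tendsto (fun x => F (x + 1) - F x) atTop (nhds (a - a)) :=
    (hFa.comp (tendsto_atTop_add_const_right _ 1 tendsto_id)).sub hFa
  have h2' : Tendsto (fun x => D (c x)) atTop (nhds (a - a)) := by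
    refine h2.congr fun x => (hceq x).symm
  have := tendsto_nhds_unique h1 h2'
  simpa using this

/-- Part (i) core. -/
lemma aux_part_i (κ a b : ℝ) (h : ℝ → ℝ) (hκ : 0 < κ) (hC1 : ContDiff ℝ 1 h)
    (h1 : Tendsto (fun x => Real.exp (κ * x) * h x) atTop (nhds a))
    (h2 : Tendsto (fun x => Real.exp (κ * x) * deriv h x) atTop (nhds b)) :
    b = -κ * a := by
  have hdiff : Differentiable ℝ h := hC1.differentiable one_ne_zero
  have hF : ∀ x : ℝ, HasDerivAt (fun x => Real.exp (κ * x) * h x)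
      (κ * (Real.exp (κ * x) * h x) + Real.exp (κ * x) * deriv h x) x := by
    intro x
    have he : HasDerivAt (fun x : ℝ => Real.exp (κ * x)) (Real.exp (κ * x) * (κ * 1)) x :=
      ((hasDerivAt_id x).const_mul κ).exp
    have := he.fun_mul (hdiff x).hasDerivAt
    exact this.congr_deriv (by ring)
  have hD : Tendsto (fun x => κ * (Real.exp (κ * x) * h x) + Real.exp (κ * x) * deriv h x)
      atTop (nhds (κ * a + b)) := (h1.const_mul κ).add h2
  have hL : κ * a + b = 0 := aux_deriv_lim_zero hF h1 hD
  linarith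

/-- L'Hôpital consequence: if `v → up` and `e^{κx} v'(x) → α` then `e^{κx}(v x - up) → -(α/κ)`. -/
lemma aux_lhopital {v : ℝ → ℝ} {κ up α : ℝ} (hκ : 0 < κ)
    (hdiff : Differentiable ℝ v)
    (hv : Tendsto v atTop (nhds up))
    (hv' : Tendsto (fun x => Real.exp (κ * x) * deriv v x) atTop (nhds α)) :
    Tendsto (fun x => Real.exp (κ * x) * (v x - up)) atTop (nhds (-(α / κ))) := by
  have hff' : ∀ᶠ x : ℝ in atTop, HasDerivAt (fun y => v y - up) (deriv v x) x :=
    Eventually.of_forall fun x => (hdiff x).hasDerivAt.sub_const up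
  have hgg' : ∀ᶠ x : ℝ in atTop, HasDerivAt (fun y : ℝ => Real.exp (-(κ * y)))
      (Real.exp (-(κ * x)) * (-κ)) x := by
    refine Eventually.of_forall fun x => ?_
    have : HasDerivAt (fun y : ℝ => -(κ * y)) (-κ) x := by
      simpa using ((hasDerivAt_id x).const_mul κ).fun_neg
    exact this.exp
  have hg' : ∀ᶠ x : ℝ in atTop, Real.exp (-(κ * x)) * (-κ) ≠ 0 :=
    Eventually.of_forall fun x =>
      mul_ne_zero (Real.exp_ne_zero _) (neg_ne_zero.mpr hκ.ne')
  have hftop : Tendsto (fun y => v y - up) atTop (nhds 0) := by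
    simpa using hv.sub_const up
  have hgtop : Tendsto (fun y : ℝ => Real.exp (-(κ * y))) atTop (nhds 0) := by
    have h1 : Tendsto (fun y : ℝ => κ * y) atTop atTop :=
      Tendsto.const_mul_atTop hκ tendsto_id
    exact Real.tendsto_exp_atBot.comp (tendsto_neg_atTop_atBot.comp h1)
  have hdiv : Tendsto (fun x => deriv v x / (Real.exp (-(κ * x)) * (-κ))) atTop
      (nhds (-(α / κ))) := by
    have := hv'.div_const (-κ)
    rw [show α / (-κ) = -(α / κ) by ring] at this
    refine this.congr fun x => ?_
    rw [Real.exp_neg]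
    field_simp
  have := HasDerivAt.lhopital_zero_atTop hff' hgg' hg' hftop hgtop hdiv
  refine this.congr fun x => ?_
  rw [Real.exp_neg]
  field_simp

/-- **Limits at `+∞` of exponentially rescaled perturbations** (Remark "xlimit").
(i) If `e^{κx} h(x) → a` and `e^{κx} h'(x) → b` as `x → +∞` for a `C¹` function `h`,
then `b = −κ a`.
(ii) In the non-characteristic monostable front setting, if
`e^{κ⁺x}(u₀−ū)(x) → a`, `e^{κ⁺x}(u₀−ū)'(x) → b`, `α⁺ := lim e^{κ⁺x} ū'(x)` exists and
is nonzero, and `1 − κ⁺ a/α⁺ > 0`, then with `ψ_∞ := κ⁺⁻¹ ln(1 − κ⁺ a/α⁺)` the shifted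
perturbation `e^{κ⁺x}(u₀(x) − ū(x − ψ_∞))` and its derivative version tend to `0` at `+∞`. -/
theorem stmt_4
    (f g : ℝ → ℝ) (hf : ContDiff ℝ (⊤ : ℕ∞) f) (hg : ContDiff ℝ (⊤ : ℕ∞) g)
    (σ : ℝ) (ub : ℝ → ℝ) (hub : ContDiff ℝ (⊤ : ℕ∞) ub)
    (hubbd : ∃ M, ∀ x, |ub x| ≤ M)
    (hub' : ∀ x, deriv ub x ≠ 0)
    (hnc : ∀ x, deriv f (ub x) ≠ σ)
    (hprof : ∀ x, (deriv f (ub x) - σ) * deriv ub x = g (ub x))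
    (um up : ℝ)
    (hlm : Tendsto ub atBot (nhds um)) (hlp : Tendsto ub atTop (nhds up))
    (hgum : g um = 0) (hgup : g up = 0)
    (hg'um : deriv g um < 0) (hg'up : 0 < deriv g up)
    (hfum : deriv f um ≠ σ) (hfup : deriv f up ≠ σ)
    (κp : ℝ) (hκp : κp = deriv g up / |deriv f up - σ|) :
    (∀ (κ a b : ℝ) (h : ℝ → ℝ), 0 < κ → ContDiff ℝ 1 h →
      Tendsto (fun x => Real.exp (κ * x) * h x) atTop (nhds a) →
      Tendsto (fun x => Real.exp (κ * x) * deriv h x) atTop (nhds b) →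
      b = -κ * a) ∧
    (∀ (u0 : ℝ → ℝ) (a b αp : ℝ), ContDiff ℝ 1 u0 →
      Tendsto (fun x => Real.exp (κp * x) * (u0 x - ub x)) atTop (nhds a) →
      Tendsto (fun x => Real.exp (κp * x) * deriv (fun y => u0 y - ub y) x) atTop (nhds b) →
      Tendsto (fun x => Real.exp (κp * x) * deriv ub x) atTop (nhds αp) →
      αp ≠ 0 →
      0 < 1 - κp * a / αp →
      Tendsto (fun x => Real.exp (κp * x)
          * (u0 x - ub (x - (1 / κp) * Real.log (1 - κp * a / αp)))) atTop (nhds 0) ∧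
      Tendsto (fun x => Real.exp (κp * x)
          * (deriv u0 x - deriv ub (x - (1 / κp) * Real.log (1 - κp * a / αp))))
        atTop (nhds 0)) := by
  have hκpos : 0 < κp := by
    rw [hκp]
    exact div_pos hg'up (abs_pos.mpr (sub_ne_zero.mpr hfup))
  refine ⟨fun κ a b h hκ hC1 h1 h2 => aux_part_i κ a b h hκ hC1 h1 h2, ?_⟩
  intro u0 a b αp hu0 ha hb hαp hαp0 hEpos
  set E : ℝ := 1 - κp * a / αp with hEdef
  set ψ : ℝ := (1 / κp) * Real.log E with hψdef
  have hubdiff : Differentiable ℝ ub := hub.differentiable (by simp)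
  have hu0diff : Differentiable ℝ u0 := hu0.differentiable one_ne_zero
  have hE : Real.exp (κp * ψ) = E := by
    rw [hψdef]
    rw [show κp * ((1 / κp) * Real.log E) = Real.log E by field_simp]
    exact Real.exp_log hEpos
  have hshift : Tendsto (fun x : ℝ => x - ψ) atTop atTop :=
    tendsto_atTop_add_const_right _ (-ψ) tendsto_id
  -- limit of e^{κx}(ub x - up)
  have hA : Tendsto (fun x => Real.exp (κp * x) * (ub x - up)) atTop (nhds (-(αp / κp))) :=
    aux_lhopital hκpos hubdiff hlp hαp
  have hAshift : Tendsto (fun x => Real.exp (κp * (x - ψ)) * (ub (x - ψ) - up)) atTop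
      (nhds (-(αp / κp))) := hA.comp hshift
  have hαshift : Tendsto (fun x => Real.exp (κp * (x - ψ)) * deriv ub (x - ψ)) atTop
      (nhds αp) := hαp.comp hshift
  -- b = -κp a
  have hbval : b = -κp * a := by
    refine aux_part_i κp a b (fun y => u0 y - ub y) hκpos
      (hu0.sub (hub.of_le (by exact_mod_cast le_top))) ha hb
  constructor
  · have hcomb : Tendsto (fun x => Real.exp (κp * x) * (u0 x - ub x)
        + (Real.exp (κp * x) * (ub x - up)
          - E * (Real.exp (κp * (x - ψ)) * (ub (x - ψ) - up)))) atTop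
        (nhds (a + (-(αp / κp) - E * -(αp / κp)))) :=
      ha.add (hA.sub (hAshift.const_mul E))
    have hval : a + (-(αp / κp) - E * -(αp / κp)) = 0 := by
      rw [hEdef]; field_simp; ring
    rw [hval] at hcomb
    refine hcomb.congr fun x => ?_
    have h3 : E * (Real.exp (κp * (x - ψ)) * (ub (x - ψ) - up))
        = Real.exp (κp * x) * (ub (x - ψ) - up) := by
      rw [← hE, ← mul_assoc, ← Real.exp_add]
      rw [show κp * ψ + κp * (x - ψ) = κp * x by ring]
    linear_combination -h3
  · have hder : ∀ x, deriv (fun y => u0 y - ub y) x = deriv u0 x - deriv ub x := fun x =>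
      deriv_sub (hu0diff x) (hubdiff x)
    have hcomb : Tendsto (fun x => Real.exp (κp * x) * deriv (fun y => u0 y - ub y) x
        + (Real.exp (κp * x) * deriv ub x
          - E * (Real.exp (κp * (x - ψ)) * deriv ub (x - ψ)))) atTop
        (nhds (b + (αp - E * αp))) :=
      hb.add (hαp.sub (hαshift.const_mul E))
    have hval : b + (αp - E * αp) = 0 := by
      rw [hbval, hEdef]; field_simp; try ring
    rw [hval] at hcomb
    refine hcomb.congr fun x => ?_
    have h3 : E * (Real.exp (κp * (x - ψ)) * deriv ub (x - ψ))
        = Real.exp (κp * x) * deriv ub (x - ψ) := by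
      rw [← hE, ← mul_assoc, ← Real.exp_add]
      rw [show κp * ψ + κp * (x - ψ) = κp * x by ring]
    rw [hder]
    linear_combination -h3
end

section
/- Let Ω : [0,∞) → [0,∞) be bounded with Ω(x) → 0 as x → +∞ and sup Ω > 0. Then there exists a nonincreasing function ρ : [0,∞) → (0,∞) with ρ(t) → 0 as t → +∞ such that ρ(s) ≤ 4·e^{(ln 2)·(t−s)}·ρ(t) for all 0 ≤ s ≤ t, and Ω(x) ≤ (sup Ω)·ρ(x) for all x ≥ 0. (Consequently any bounded function converging to 0 at infinity is dominated, up to a constant, by a sub-exponential weight.) -/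
open Filter Set

private noncomputable def auxc (m : ℕ → ℝ) (M : ℝ) : ℕ → ℝ
  | 0 => M
  | n + 1 => max (auxc m M n / 2) (m (n + 1))

private lemma auxc_pos (m : ℕ → ℝ) (M : ℝ) (hM : 0 < M) : ∀ n, 0 < auxc m M n := by
  intro n
  induction n with
  | zero => simpa [auxc] using hM
  | succ n ih => exact lt_max_of_lt_left (by positivity)

private lemma auxc_ge (m : ℕ → ℝ) (M : ℝ) (hm0 : m 0 ≤ M) : ∀ n, m n ≤ auxc m M n := by
  intro n
  cases n with
  | zero => simpa [auxc] using hm0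
  | succ n => exact le_max_right _ _

private lemma auxc_anti (m : ℕ → ℝ) (M : ℝ) (hM : 0 < M) (hm0 : m 0 ≤ M)
    (hm : ∀ n, m (n + 1) ≤ m n) : ∀ n, auxc m M (n + 1) ≤ auxc m M n := by
  intro n
  have h1 : auxc m M n / 2 ≤ auxc m M n := by
    have := auxc_pos m M hM n; linarith
  have h2 : m (n + 1) ≤ auxc m M n := (hm n).trans (auxc_ge m M hm0 n)
  exact max_le h1 h2

private lemma auxc_anti' (m : ℕ → ℝ) (M : ℝ) (hM : 0 < M) (hm0 : m 0 ≤ M)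
    (hm : ∀ n, m (n + 1) ≤ m n) : ∀ k l, k ≤ l → auxc m M l ≤ auxc m M k := by
  intro k l hkl
  induction l with
  | zero => simp_all
  | succ l ih =>
    rcases Nat.lt_or_ge k (l + 1) with h | h
    · exact (auxc_anti m M hM hm0 hm l).trans (ih (Nat.lt_succ_iff.mp h))
    · have : k = l + 1 := le_antisymm hkl h
      simp [this]

private lemma auxc_half (m : ℕ → ℝ) (M : ℝ) (n : ℕ) :
    auxc m M n ≤ 2 * auxc m M (n + 1) := by
  have : auxc m M n / 2 ≤ auxc m M (n + 1) := le_max_left _ _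
  linarith

private lemma auxc_le_pow (m : ℕ → ℝ) (M : ℝ) :
    ∀ k d : ℕ, auxc m M k ≤ 2 ^ d * auxc m M (k + d) := by
  intro k d
  induction d with
  | zero => simp
  | succ d ih =>
    calc auxc m M k ≤ 2 ^ d * auxc m M (k + d) := ih
      _ ≤ 2 ^ d * (2 * auxc m M (k + d + 1)) := by
          have := auxc_half m M (k + d)
          have h2 : (0:ℝ) ≤ 2 ^ d := by positivity
          exact mul_le_mul_of_nonneg_left this h2
      _ = 2 ^ (d + 1) * auxc m M (k + (d + 1)) := by ring_nf

private lemma auxc_tendsto (m : ℕ → ℝ) (M : ℝ) (hM : 0 < M) (hm0 : m 0 ≤ M)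
    (hm : ∀ n, m (n + 1) ≤ m n) (hmnn : ∀ n, 0 ≤ m n)
    (hlim : ∀ ε > 0, ∃ N : ℕ, ∀ n ≥ N, m n ≤ ε) :
    Tendsto (auxc m M) atTop (nhds 0) := by
  rw [Metric.tendsto_atTop]
  intro ε hε
  obtain ⟨N, hN⟩ := hlim (ε / 2) (by positivity)
  -- claim: ∀ j, auxc (N + j) ≤ max (auxc N / 2 ^ j) (ε / 2)
  have claim : ∀ j : ℕ, auxc m M (N + j) ≤ max (auxc m M N / 2 ^ j) (ε / 2) := by
    intro j
    induction j with
    | zero => simp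
    | succ j ih =>
      have h1 : auxc m M (N + j) / 2 ≤ max (auxc m M N / 2 ^ (j + 1)) (ε / 2) := by
        rcases max_cases (auxc m M N / 2 ^ j) (ε / 2) with ⟨h, _⟩ | ⟨h, _⟩
        · rw [h] at ih
          refine le_max_of_le_left ?_
          rw [pow_succ]
          have h2 : (0:ℝ) < 2 ^ j := by positivity
          calc auxc m M (N + j) / 2 ≤ (auxc m M N / 2 ^ j) / 2 := by linarith
            _ = auxc m M N / (2 ^ j * 2) := by ring
        · rw [h] at ih
          refine le_max_of_le_right ?_
          linarith
      have h2 : m (N + j + 1) ≤ ε / 2 := hN _ (by omega)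
      have : auxc m M (N + (j + 1)) = max (auxc m M (N + j) / 2) (m (N + j + 1)) := rfl
      rw [this]
      exact max_le h1 (le_max_of_le_right h2)
  -- choose j with auxc N / 2^j ≤ ε/2
  obtain ⟨j, hj⟩ := pow_unbounded_of_one_lt (auxc m M N / (ε / 2)) (by norm_num : (1:ℝ) < 2)
  have hj' : auxc m M N / 2 ^ j ≤ ε / 2 := by
    rw [div_le_iff₀ (by positivity)]
    rw [div_lt_iff₀ (by positivity)] at hj
    linarith
  refine ⟨N + j, fun n hn => ?_⟩
  have h1 : auxc m M n ≤ auxc m M (N + j) := auxc_anti' m M hM hm0 hm _ _ hn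
  have h2 : auxc m M (N + j) ≤ ε / 2 := (claim j).trans (max_le hj' le_rfl)
  have h3 : 0 < auxc m M n := auxc_pos m M hM n
  rw [Real.dist_eq, abs_of_pos (by linarith)]
  simp only [sub_zero]
  linarith

/-- **Domination of vanishing weights by sub-exponential weights**: any bounded
nonnegative `Ω` on `[0,∞)` converging to `0` at `+∞` with `sup Ω > 0` is dominated by
`(sup Ω)·ρ` for some positive nonincreasing `ρ` tending to `0` at `+∞` and satisfying
the sub-exponential ratio bound `ρ(s) ≤ 4·e^{(ln 2)(t−s)}·ρ(t)` for `0 ≤ s ≤ t`. -/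
theorem stmt_10 (Ω : ℝ → ℝ)
    (hnn : ∀ x, 0 ≤ x → 0 ≤ Ω x)
    (hbd : BddAbove (Ω '' Ici (0:ℝ)))
    (hlim : Tendsto Ω atTop (nhds 0))
    (hpos : 0 < sSup (Ω '' Ici (0:ℝ))) :
    ∃ ρ : ℝ → ℝ,
      (∀ t, 0 ≤ t → 0 < ρ t) ∧
      (∀ s t, 0 ≤ s → s ≤ t → ρ t ≤ ρ s) ∧
      Tendsto ρ atTop (nhds 0) ∧
      (∀ s t, 0 ≤ s → s ≤ t →
        ρ s ≤ 4 * Real.exp (Real.log 2 * (t - s)) * ρ t) ∧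
      (∀ x, 0 ≤ x → Ω x ≤ sSup (Ω '' Ici (0:ℝ)) * ρ x) := by
  set M := sSup (Ω '' Ici (0:ℝ)) with hMdef
  set m : ℕ → ℝ := fun n => sSup (Ω '' Ici (n : ℝ)) with hmdef
  have hne : ∀ n : ℕ, (Ω '' Ici (n : ℝ)).Nonempty := fun n =>
    ⟨Ω n, mem_image_of_mem _ self_mem_Ici⟩
  have hsub : ∀ n : ℕ, Ω '' Ici (n : ℝ) ⊆ Ω '' Ici (0:ℝ) := fun n =>
    image_mono (Ici_subset_Ici.2 (by positivity))
  have hbdn : ∀ n : ℕ, BddAbove (Ω '' Ici (n : ℝ)) := fun n => hbd.mono (hsub n)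
  have hm0 : m 0 ≤ M := by simp [hmdef, hMdef]
  have hmanti : ∀ n, m (n + 1) ≤ m n := by
    intro n
    exact csSup_le_csSup (hbdn n) (hne (n + 1))
      (image_mono (Ici_subset_Ici.2 (by push_cast; linarith)))
  have hmnn : ∀ n, 0 ≤ m n := by
    intro n
    exact le_csSup_of_le (hbdn n) (mem_image_of_mem _ self_mem_Ici) (hnn _ (by positivity))
  have hmlim : ∀ ε > 0, ∃ N : ℕ, ∀ n ≥ N, m n ≤ ε := by
    intro ε hε
    obtain ⟨X, hX⟩ := (Metric.tendsto_atTop.mp hlim) ε hε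
    refine ⟨⌈X⌉₊, fun n hn => ?_⟩
    refine csSup_le (hne n) ?_
    rintro y ⟨x, hx, rfl⟩
    have hxX : X ≤ x := by
      calc X ≤ (⌈X⌉₊ : ℝ) := Nat.le_ceil X
        _ ≤ (n : ℝ) := by exact_mod_cast hn
        _ ≤ x := hx
    have := hX x hxX
    rw [Real.dist_eq, sub_zero] at this
    exact le_of_lt ((le_abs_self _).trans_lt this)
  set c : ℕ → ℝ := auxc m M with hcdef
  have hcpos := auxc_pos m M hpos
  have hcge := auxc_ge m M hm0
  have hcanti := auxc_anti' m M hpos hm0 hmanti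
  refine ⟨fun t => c ⌊t⌋₊ / M, ?_, ?_, ?_, ?_, ?_⟩
  · intro t _
    exact div_pos (hcpos _) hpos
  · intro s t hs hst
    have h : ⌊s⌋₊ ≤ ⌊t⌋₊ := Nat.floor_le_floor hst
    exact div_le_div_of_nonneg_right (hcanti _ _ h) hpos.le
  · have h1 : Tendsto c atTop (nhds 0) :=
      auxc_tendsto m M hpos hm0 hmanti hmnn hmlim
    have h2 : Tendsto (fun t : ℝ => ⌊t⌋₊) atTop atTop := tendsto_nat_floor_atTop
    have := (h1.comp h2).div_const M
    simpa using this
  · intro s t hs hst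
    have hk : ⌊s⌋₊ ≤ ⌊t⌋₊ := Nat.floor_le_floor hst
    set k := ⌊s⌋₊
    set l := ⌊t⌋₊
    have hckl : c k ≤ 2 ^ (l - k) * c l := by
      have := auxc_le_pow m M k (l - k)
      rwa [Nat.add_sub_cancel' hk] at this
    have hexp : (2:ℝ) ^ (l - k) ≤ 4 * Real.exp (Real.log 2 * (t - s)) := by
      have hcast : ((l - k : ℕ) : ℝ) ≤ t - s + 1 := by
        rw [Nat.cast_sub hk]
        have h1 : (l : ℝ) ≤ t := Nat.floor_le (hs.trans hst)
        have h2 : s < (k : ℝ) + 1 := Nat.lt_floor_add_one s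
        linarith
      have h1 : (2:ℝ) ^ (l - k) = Real.exp (Real.log 2 * ((l - k : ℕ) : ℝ)) := by
        rw [← Real.rpow_natCast 2 (l - k), Real.rpow_def_of_pos (by norm_num)]
      rw [h1]
      have h2 : Real.exp (Real.log 2 * ((l - k : ℕ) : ℝ)) ≤
          Real.exp (Real.log 2 * (t - s + 1)) := by
        apply Real.exp_le_exp.mpr
        have hlog : (0:ℝ) ≤ Real.log 2 := Real.log_nonneg (by norm_num)
        exact mul_le_mul_of_nonneg_left hcast hlog
      refine h2.trans ?_
      rw [mul_add, mul_one, Real.exp_add, Real.exp_log (by norm_num)]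
      have : (0:ℝ) < Real.exp (Real.log 2 * (t - s)) := Real.exp_pos _
      linarith
    have hclpos : 0 < c l := hcpos l
    calc c k / M ≤ (2 ^ (l - k) * c l) / M := by gcongr
      _ ≤ (4 * Real.exp (Real.log 2 * (t - s)) * c l) / M := by gcongr
      _ = 4 * Real.exp (Real.log 2 * (t - s)) * (c l / M) := by ring
  · intro x hx
    have h1 : Ω x ≤ m ⌊x⌋₊ := le_csSup (hbdn _) (mem_image_of_mem _ (Nat.floor_le hx))
    have h2 : m ⌊x⌋₊ ≤ c ⌊x⌋₊ := hcge _
    have h3 : M * (c ⌊x⌋₊ / M) = c ⌊x⌋₊ := by field_simp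
    rw [h3]
    exact h1.trans h2
end

section
/- Let f, g : ℝ → ℝ be C^1 and σ ∈ ℝ. Let ū : (−∞,0) → ℝ be C^1 with f'(ū(x)) ≠ σ and ū'(x)·(f'(ū(x)) − σ) = g(ū(x)) for all x < 0. Assume ū(x) → u_∞ as x → −∞, with g(u_∞) = 0, g'(u_∞) ≠ 0, f'(u_∞) ≠ σ, and ū(x) ≠ u_∞ for all x < 0. Then g'(u_∞)/(f'(u_∞) − σ) > 0. -/
open Filter Set

/-- **Outgoing characteristics at a non-degenerate non-characteristic endstate**: if a
nonconstant profile piece on `(−∞,0)` solves `ū'·(f'(ū) − σ) = g(ū)`, stays away from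
its endstate `u_∞` at `−∞`, and `u_∞` is non-degenerate (`g'(u_∞) ≠ 0`) and
non-characteristic (`f'(u_∞) ≠ σ`), then `g'(u_∞)/(f'(u_∞) − σ) > 0`. -/
theorem stmt_12 (f g : ℝ → ℝ) (hf : ContDiff ℝ 1 f) (hg : ContDiff ℝ 1 g)
    (σ : ℝ) (ub : ℝ → ℝ)
    (hub : ContDiffOn ℝ 1 ub (Iio (0:ℝ)))
    (hnc : ∀ x < (0:ℝ), deriv f (ub x) ≠ σ)
    (hode : ∀ x < (0:ℝ), deriv ub x * (deriv f (ub x) - σ) = g (ub x))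
    (uinf : ℝ) (hlim : Tendsto ub atBot (nhds uinf))
    (hg0 : g uinf = 0) (hg' : deriv g uinf ≠ 0) (hf' : deriv f uinf ≠ σ)
    (hne : ∀ x < (0:ℝ), ub x ≠ uinf) :
    0 < deriv g uinf / (deriv f uinf - σ) := by
  set A := deriv g uinf with hA
  set B := deriv f uinf - σ with hB
  have hBne : B ≠ 0 := sub_ne_zero.mpr hf'
  have hABne : A / B ≠ 0 := div_ne_zero hg' hBne
  by_contra hcon
  have hAB : A / B < 0 := lt_of_le_of_ne (not_lt.mp hcon) hABne
  -- ub tends to uinf within the punctured neighborhood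
  have hlim' : Tendsto ub atBot (nhdsWithin uinf {uinf}ᶜ) := by
    rw [tendsto_nhdsWithin_iff]
    refine ⟨hlim, ?_⟩
    filter_upwards [eventually_lt_atBot (0:ℝ)] with x hx
    exact hne x hx
  have hgd : HasDerivAt g A uinf := (hg.differentiable one_ne_zero uinf).hasDerivAt
  have hslope : Tendsto (fun x => slope g uinf (ub x)) atBot (nhds A) :=
    (hasDerivAt_iff_tendsto_slope.mp hgd).comp hlim'
  have hfd : Tendsto (fun x => deriv f (ub x) - σ) atBot (nhds B) :=
    (((hf.continuous_deriv le_rfl).tendsto uinf).comp hlim).sub tendsto_const_nhds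
  have hquot : Tendsto (fun x => slope g uinf (ub x) / (deriv f (ub x) - σ)) atBot
      (nhds (A / B)) := hslope.div hfd hBne
  have hev : ∀ᶠ x in atBot, slope g uinf (ub x) / (deriv f (ub x) - σ) < 0 :=
    hquot.eventually (Filter.Tendsto.eventually_lt_const hAB tendsto_id)
  -- formula for the derivative of ub
  have hderiv : ∀ x < (0:ℝ), deriv ub x =
      slope g uinf (ub x) / (deriv f (ub x) - σ) * (ub x - uinf) := by
    intro x hx
    have hp : deriv f (ub x) - σ ≠ 0 := sub_ne_zero.mpr (hnc x hx)
    have hd : ub x - uinf ≠ 0 := sub_ne_zero.mpr (hne x hx)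
    have h1 : deriv ub x = g (ub x) / (deriv f (ub x) - σ) :=
      (eq_div_iff hp).mpr (hode x hx)
    rw [h1, slope_def_field, hg0, sub_zero]
    field_simp
  -- ub stays on one side of uinf
  have hside : (∀ x < (0:ℝ), ub x < uinf) ∨ (∀ x < (0:ℝ), uinf < ub x) := by
    by_contra hcon2
    push_neg at hcon2
    obtain ⟨⟨a, ha, ha'⟩, ⟨b, hb, hb'⟩⟩ := hcon2
    have hsub : uIcc a b ⊆ Iio (0:ℝ) := by
      intro t ht
      rw [Set.mem_uIcc] at ht
      rcases ht with ⟨_, h2⟩ | ⟨_, h2⟩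
      · exact lt_of_le_of_lt h2 hb
      · exact lt_of_le_of_lt h2 ha
    have hcont : ContinuousOn ub (uIcc a b) := hub.continuousOn.mono hsub
    have hm : uinf ∈ uIcc (ub a) (ub b) := Set.mem_uIcc.mpr (Or.inr ⟨hb', ha'⟩)
    obtain ⟨x, hx, hxe⟩ := intermediate_value_uIcc hcont hm
    exact hne x (hsub hx) hxe
  obtain ⟨X0, hX0⟩ := eventually_atBot.mp hev
  set X := min X0 (-1) with hXdef
  have hX : X < 0 := lt_of_le_of_lt (min_le_right _ _) (by norm_num)
  have hXsub : Iic X ⊆ Iio (0:ℝ) := fun t ht => lt_of_le_of_lt ht hX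
  have hcontX : ContinuousOn ub (Iic X) := hub.continuousOn.mono hXsub
  rcases hside with hlt | hgt
  · -- ub < uinf : ub strictly increasing near −∞, contradiction
    have hmono : StrictMonoOn ub (Iic X) := by
      apply strictMonoOn_of_deriv_pos (convex_Iic X) hcontX
      intro x hx
      rw [interior_Iic] at hx
      have hx0 : x < 0 := lt_trans hx hX
      rw [hderiv x hx0]
      exact mul_pos_of_neg_of_neg
        (hX0 x (le_of_lt (lt_of_lt_of_le hx (min_le_left _ _))))
        (sub_neg.mpr (hlt x hx0))
    have hle : uinf ≤ ub X := by
      apply le_of_tendsto hlim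
      filter_upwards [eventually_le_atBot (X - 1)] with x hx
      exact le_of_lt (hmono (mem_Iic.mpr (by linarith)) (mem_Iic.mpr le_rfl) (by linarith))
    exact absurd hle (not_le.mpr (hlt X hX))
  · -- uinf < ub : ub strictly decreasing near −∞, contradiction
    have hanti : StrictAntiOn ub (Iic X) := by
      apply strictAntiOn_of_deriv_neg (convex_Iic X) hcontX
      intro x hx
      rw [interior_Iic] at hx
      have hx0 : x < 0 := lt_trans hx hX
      rw [hderiv x hx0]
      exact mul_neg_of_neg_of_pos
        (hX0 x (le_of_lt (lt_of_lt_of_le hx (min_le_left _ _))))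
        (sub_pos.mpr (hgt x hx0))
    have hle : ub X ≤ uinf := by
      apply ge_of_tendsto hlim
      filter_upwards [eventually_le_atBot (X - 1)] with x hx
      exact le_of_lt (hanti (mem_Iic.mpr (by linarith)) (mem_Iic.mpr le_rfl) (by linarith))
    exact absurd hle (not_le.mpr (hgt X hX))
end

section
/- Let d ≥ 2, let f_∥, g : ℝ → ℝ and F_⊥ : ℝ → ℝ^{d−1} be C^1, and let σ = (σ_∥, σ_⊥) ∈ ℝ×ℝ^{d−1}. Let ū : ℝ → ℝ be C^1 with (f_∥'(ū(x)) − σ_∥)·ū'(x) = g(ū(x)) for all x, and let Z : ℝ → ℝ^{d−1} be C^1 with (f_∥'(ū(x)) − σ_∥)·Z'(x) = F_⊥'(ū(x)) − σ_⊥ for all x. Let ψ_0 : ℝ^{d−1} → ℝ be C^1 and suppose Φ : ℝ×ℝ^{d−1} → ℝ is C^1 and satisfies Φ(x,y) + ψ_0(y − Z(Φ(x,y))) = x for all (x,y). Then U(x,y) := ū(Φ(x,y)) satisfies (f_∥'(U) − σ_∥)·∂_x U + (F_⊥'(U) − σ_⊥)·∇_y U = g(U) at every point; equivalently, (t,(x,y))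 ↦ U(x − t·σ_∥, y − t·σ_⊥) is a classical solution of the multidimensional balance law ∂_t u + div_𝐱(𝐅(u)) = g(u) with flux 𝐅 = (f_∥, F_⊥). -/
open Filter Set

/-- **Genuinely multidimensional traveling waves near a smooth planar wave**: if `ū` is
a one-dimensional profile of speed `σ_∥`, `Z` solves `(f_∥'(ū) − σ_∥) Z' = F_⊥'(ū) − σ_⊥`
and `Φ(·,y)` inverts `x ↦ x + ψ₀(y − Z(x))` for a `C¹` shift `ψ₀`, then
`U = ū ∘ Φ` satisfies the multidimensional profile equation
`(f_∥'(U) − σ_∥) ∂_x U + (F_⊥'(U) − σ_⊥)·∇_y U = g(U)`; equivalently,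
`(t,(x,y)) ↦ U(x − tσ_∥, y − tσ_⊥)` is a classical solution of
`∂_t u + div_𝐱(𝐅(u)) = g(u)` with flux `𝐅 = (f_∥, F_⊥)`. -/
theorem stmt_17 (d : ℕ) (hd : 2 ≤ d) (n : ℕ) (hn : d = n + 1)
    (fpar g : ℝ → ℝ) (Fperp : ℝ → (Fin n → ℝ))
    (hf : ContDiff ℝ 1 fpar) (hg : ContDiff ℝ 1 g) (hF : ContDiff ℝ 1 Fperp)
    (σpar : ℝ) (σperp : Fin n → ℝ)
    (ub : ℝ → ℝ) (hub : ContDiff ℝ 1 ub)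
    (hode : ∀ x, (deriv fpar (ub x) - σpar) * deriv ub x = g (ub x))
    (Z : ℝ → (Fin n → ℝ)) (hZ : ContDiff ℝ 1 Z)
    (hZode : ∀ x, (deriv fpar (ub x) - σpar) • deriv Z x = deriv Fperp (ub x) - σperp)
    (ψ0 : (Fin n → ℝ) → ℝ) (hψ0 : ContDiff ℝ 1 ψ0)
    (Φ : ℝ × (Fin n → ℝ) → ℝ) (hΦ : ContDiff ℝ 1 Φ)
    (hinv : ∀ p : ℝ × (Fin n → ℝ), Φ p + ψ0 (p.2 - Z (Φ p)) = p.1) :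
    (∀ p : ℝ × (Fin n → ℝ),
      (deriv fpar (ub (Φ p)) - σpar)
          * fderiv ℝ (fun q : ℝ × (Fin n → ℝ) => ub (Φ q)) p (1, 0)
        + fderiv ℝ (fun q : ℝ × (Fin n → ℝ) => ub (Φ q)) p
            (0, deriv Fperp (ub (Φ p)) - σperp)
        = g (ub (Φ p))) ∧
    (∀ (t : ℝ) (p : ℝ × (Fin n → ℝ)),
      deriv (fun s : ℝ => ub (Φ (p.1 - s * σpar, p.2 - s • σperp))) t
        + deriv fpar (ub (Φ (p.1 - t * σpar, p.2 - t • σperp)))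
            * fderiv ℝ (fun q : ℝ × (Fin n → ℝ) =>
                ub (Φ (q.1 - t * σpar, q.2 - t • σperp))) p (1, 0)
        + fderiv ℝ (fun q : ℝ × (Fin n → ℝ) =>
              ub (Φ (q.1 - t * σpar, q.2 - t • σperp))) p
            (0, deriv Fperp (ub (Φ (p.1 - t * σpar, p.2 - t • σperp))))
        = g (ub (Φ (p.1 - t * σpar, p.2 - t • σperp)))) := by
  have hΦd : Differentiable ℝ Φ := hΦ.differentiable one_ne_zero
  have hubd : Differentiable ℝ ub := hub.differentiable one_ne_zero
  have hZd : Differentiable ℝ Z := hZ.differentiable one_ne_zero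
  have hψd : Differentiable ℝ ψ0 := hψ0.differentiable one_ne_zero
  -- derivative of ū ∘ Φ
  have hL : ∀ p : ℝ × (Fin n → ℝ), HasFDerivAt (fun q => ub (Φ q))
      ((ContinuousLinearMap.smulRight (1 : ℝ →L[ℝ] ℝ) (deriv ub (Φ p))).comp (fderiv ℝ Φ p)) p :=
    fun p => HasFDerivAt.comp p ((hubd _).hasDerivAt.hasFDerivAt) ((hΦd p).hasFDerivAt)
  -- key pointwise identity for the fderiv of Φ
  have hH : ∀ (p : ℝ × (Fin n → ℝ)) (v : ℝ × (Fin n → ℝ)),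
      fderiv ℝ Φ p v
        + fderiv ℝ ψ0 (p.2 - Z (Φ p)) (v.2 - fderiv ℝ Φ p v • deriv Z (Φ p)) = v.1 := by
    intro p v
    set A := fderiv ℝ Φ p with hA
    set c := fderiv ℝ ψ0 (p.2 - Z (Φ p)) with hc
    have hAΦ : HasFDerivAt Φ A p := (hΦd p).hasFDerivAt
    have hZΦ : HasFDerivAt (fun q => Z (Φ q))
        ((ContinuousLinearMap.smulRight (1 : ℝ →L[ℝ] ℝ) (deriv Z (Φ p))).comp A) p :=
      HasFDerivAt.comp p ((hZd _).hasDerivAt.hasFDerivAt) hAΦ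
    have hinner : HasFDerivAt (fun q : ℝ × (Fin n → ℝ) => q.2 - Z (Φ q))
        (ContinuousLinearMap.snd ℝ ℝ (Fin n → ℝ)
          - (ContinuousLinearMap.smulRight (1 : ℝ →L[ℝ] ℝ) (deriv Z (Φ p))).comp A) p :=
      (hasFDerivAt_snd).sub hZΦ
    have hψΦ : HasFDerivAt (fun q : ℝ × (Fin n → ℝ) => ψ0 (q.2 - Z (Φ q)))
        (c.comp (ContinuousLinearMap.snd ℝ ℝ (Fin n → ℝ)
          - (ContinuousLinearMap.smulRight (1 : ℝ →L[ℝ] ℝ) (deriv Z (Φ p))).comp A)) p :=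
      HasFDerivAt.comp p ((hψd _).hasFDerivAt) hinner
    have hsum : HasFDerivAt (fun q : ℝ × (Fin n → ℝ) => Φ q + ψ0 (q.2 - Z (Φ q)))
        (A + c.comp (ContinuousLinearMap.snd ℝ ℝ (Fin n → ℝ)
          - (ContinuousLinearMap.smulRight (1 : ℝ →L[ℝ] ℝ) (deriv Z (Φ p))).comp A)) p :=
      hAΦ.add hψΦ
    have hfun : (fun q : ℝ × (Fin n → ℝ) => Φ q + ψ0 (q.2 - Z (Φ q)))
        = (fun q : ℝ × (Fin n → ℝ) => q.1) := funext hinv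
    rw [hfun] at hsum
    have huniq := hsum.unique (hasFDerivAt_fst)
    have := DFunLike.congr_fun huniq v
    simpa using this
  -- main identity in terms of A and u'
  have main : ∀ p : ℝ × (Fin n → ℝ),
      (deriv fpar (ub (Φ p)) - σpar) * (fderiv ℝ Φ p (1, 0) * deriv ub (Φ p))
        + fderiv ℝ Φ p (0, deriv Fperp (ub (Φ p)) - σperp) * deriv ub (Φ p)
        = g (ub (Φ p)) := by
    intro p
    set A := fderiv ℝ Φ p with hA
    set c := fderiv ℝ ψ0 (p.2 - Z (Φ p)) with hc
    set z' := deriv Z (Φ p) with hz'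
    set α := deriv fpar (ub (Φ p)) - σpar with hα
    -- A (1,0) * (1 - c z') = 1
    have h10 := hH p (1, 0)
    simp only [map_sub, map_smul, smul_eq_mul] at h10
    have key1 : A (1, 0) * (1 - c z') = 1 := by
      have : c ((0 : Fin n → ℝ) - A (1, 0) • z') = c 0 - A (1, 0) * c z' := by
        rw [map_sub, map_smul]; simp
      simp only [this, map_zero] at h10
      ring_nf
      ring_nf at h10
      linarith [h10]
    have hc1 : (1 : ℝ) - c z' ≠ 0 := by
      intro h
      rw [h, mul_zero] at key1
      exact zero_ne_one key1
    -- A (1, z') = 1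
    have h1z := hH p (1, z')
    have key2 : A (1, z') = 1 := by
      have he : c (z' - A (1, z') • z') = c z' - A (1, z') * c z' := by
        rw [map_sub, map_smul]; simp
      simp only [he] at h1z
      have : (A (1, z') - 1) * (1 - c z') = 0 := by ring_nf; ring_nf at h1z; linarith
      rcases mul_eq_zero.1 this with h | h
      · linarith
      · exact absurd h hc1
    -- linearity facts
    have hsplit : A (1, 0) + A (0, z') = 1 := by
      have : ((1, 0) : ℝ × (Fin n → ℝ)) + (0, z') = (1, z') := by
        simp [Prod.ext_iff]
      rw [← map_add, this, key2]
    have hFz : ((0 : ℝ), deriv Fperp (ub (Φ p)) - σperp) = α • ((0 : ℝ), z') := by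
      rw [← hZode (Φ p)]
      simp [Prod.ext_iff, ← hα, ← hz']
    rw [hFz, map_smul, smul_eq_mul]
    have := hode (Φ p)
    rw [← hα] at this
    linear_combination (α * deriv ub (Φ p)) * hsplit + this
  constructor
  · intro p
    rw [(hL p).fderiv]
    simp only [ContinuousLinearMap.coe_comp', Function.comp_apply,
      ContinuousLinearMap.smulRight_apply, ContinuousLinearMap.one_apply,
      smul_eq_mul, one_mul]
    have := main p
    linarith [main p]
  · intro t p
    set q : ℝ × (Fin n → ℝ) := (p.1 - t * σpar, p.2 - t • σperp) with hq
    set A := fderiv ℝ Φ q with hA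
    set u' := deriv ub (Φ q) with hu'
    -- translation map has derivative id
    have hT : HasFDerivAt (fun r : ℝ × (Fin n → ℝ) => (r.1 - t * σpar, r.2 - t • σperp))
        (ContinuousLinearMap.id ℝ (ℝ × (Fin n → ℝ))) p := by
      have : (fun r : ℝ × (Fin n → ℝ) => ((r.1 - t * σpar, r.2 - t • σperp) : ℝ × (Fin n → ℝ)))
          = fun r => r - (t * σpar, t • σperp) := by
        funext r; simp [Prod.ext_iff, Prod.sub_def]
      rw [this]
      simpa using (hasFDerivAt_id p).sub_const (t * σpar, t • σperp)
    -- spatial fderiv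
    have hLt : HasFDerivAt (fun r : ℝ × (Fin n → ℝ) => ub (Φ (r.1 - t * σpar, r.2 - t • σperp)))
        (((ContinuousLinearMap.smulRight (1 : ℝ →L[ℝ] ℝ) u').comp A).comp
          (ContinuousLinearMap.id ℝ (ℝ × (Fin n → ℝ)))) p :=
      by have := (hL q).comp p hT; exact this
    -- time derivative
    have hγ : HasDerivAt (fun s : ℝ => ((p.1 - s * σpar, p.2 - s • σperp) : ℝ × (Fin n → ℝ)))
        ((-σpar, -σperp)) t := by
      have h1 : HasDerivAt (fun s : ℝ => p.1 - s * σpar) (-σpar) t := by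
        simpa using ((hasDerivAt_id t).mul_const σpar).const_sub p.1
      have h2 : HasDerivAt (fun s : ℝ => p.2 - s • σperp) (-σperp) t := by
        simpa using ((hasDerivAt_id t).smul_const σperp).const_sub p.2
      exact h1.prodMk h2
    have htime : HasDerivAt (fun s : ℝ => ub (Φ (p.1 - s * σpar, p.2 - s • σperp)))
        (((ContinuousLinearMap.smulRight (1 : ℝ →L[ℝ] ℝ) u').comp A) (-σpar, -σperp)) t :=
      by have := (hL q).comp_hasDerivAt t hγ; exact this
    rw [htime.deriv, hLt.fderiv]
    simp only [ContinuousLinearMap.coe_comp', Function.comp_apply,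
      ContinuousLinearMap.coe_id', id_eq, ContinuousLinearMap.smulRight_apply,
      ContinuousLinearMap.one_apply, smul_eq_mul, one_mul]
    -- linearity manipulations
    have hv1 : A (-σpar, -σperp) = -σpar * A (1, 0) - A (0, σperp) := by
      have : ((-σpar, -σperp) : ℝ × (Fin n → ℝ)) = (-σpar) • (1, 0) - (0, σperp) := by
        simp [Prod.ext_iff]
      rw [this, map_sub, map_smul, smul_eq_mul]
    have hv2 : A (0, deriv Fperp (ub (Φ q))) = A (0, deriv Fperp (ub (Φ q)) - σperp) + A (0, σperp) := by
      rw [← map_add]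
      congr 1
      simp [Prod.ext_iff]
    have hmq := main q
    rw [← hA, ← hu'] at hmq
    rw [hv1, hv2]
    linear_combination hmq
end

section
/- Let d ≥ 2, let 𝐅 = (f_∥, F_⊥) : ℝ → ℝ×ℝ^{d−1} and g : ℝ → ℝ be continuous, and let u_- ≠ u_+ satisfy g(u_-) = g(u_+) = 0. Set σ_∥ := (f_∥(u_+) − f_∥(u_-))/(u_+ − u_-) and σ_⊥ := (F_⊥(u_+) − F_⊥(u_-))/(u_+ − u_-). Let ψ_0 : ℝ^{d−1} → ℝ be C^1. Define u(t,(x,y)) := u_- if x − t·σ_∥ < ψ_0(y − t·σ_⊥) and u(t,(x,y)) := u_+ if x − t·σ_∥ > ψ_0(y − t·σ_⊥). Then u is a weak solution of ∂_t u + div_𝐱(𝐅(u)) = g(u) on (0,∞)×ℝ^d: for every φ ∈ C_c^∞((0,∞)×ℝ^d), ∫_0^∞∫_{ℝ^d} (u·∂_t φ + 𝐅(u)·∇_𝐱 φ + g(u)·φ) d𝐱 dt = 0. -/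
open Filter Set Function MeasureTheory

lemma auxA {E : Type*} [NormedAddCommGroup E] [NormedSpace ℝ E]
    [MeasurableSpace E] [BorelSpace E] [FiniteDimensional ℝ E]
    (μ : Measure E) [μ.IsAddHaarMeasure] {Φ : E → ℝ}
    (hΦ : ContDiff ℝ (⊤:ℕ∞) Φ) (hc : HasCompactSupport Φ) (v : E) :
    ∫ x, fderiv ℝ Φ x v ∂μ = 0 := by
  obtain ⟨D, hD⟩ := ContDiff.lipschitzWith_of_hasCompactSupport hc hΦ (by simp)
  have h0 : LipschitzWith 0 (fun _ : E => (1:ℝ)) := LipschitzWith.const 1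
  have key := LipschitzWith.integral_lineDeriv_mul_eq (μ := μ) h0 hD hc v
  have hz : ∀ x : E, lineDeriv ℝ (fun _ : E => (1:ℝ)) x v = 0 := fun x => by
    rw [(differentiableAt_const (1:ℝ)).lineDeriv_eq_fderiv]; simp
  simp only [hz, zero_mul, integral_zero] at key
  have hdiff : Differentiable ℝ Φ := hΦ.differentiable (by simp)
  have : ∀ x, lineDeriv ℝ Φ x (-v) * (fun _ : E => (1:ℝ)) x = -(fderiv ℝ Φ x v) := by
    intro x
    rw [(hdiff x).lineDeriv_eq_fderiv]
    simp
  simp only [this, integral_neg] at key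
  linarith [key]

lemma auxB {f : ℝ → ℝ} (hf : ContDiff ℝ (⊤:ℕ∞) f) (hc : HasCompactSupport f) :
    ∫ x, deriv f x = 0 := by
  have := auxA (volume : Measure ℝ) hf hc 1
  simpa only [fderiv_apply_one_eq_deriv] using this

/-- **Multidimensional shock-type traveling waves with arbitrarily curved discontinuity
hypersurface**: given zeros `u_- ≠ u_+` of `g`, with longitudinal and transverse speeds
given by the Rankine–Hugoniot ratios, and any `C¹` function `ψ₀`, the two-state function
jumping across `{x = σ_∥ t + ψ₀(y − σ_⊥ t)}` is a weak solution of
`∂_t u + div_𝐱(𝐅(u)) = g(u)` on `(0,∞) × ℝ^d` with flux `𝐅 = (f_∥, F_⊥)`. -/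
theorem stmt_18 (d : ℕ) (hd : 2 ≤ d) (n : ℕ) (hn : d = n + 1)
    (fpar : ℝ → ℝ) (Fperp : ℝ → (Fin n → ℝ)) (g : ℝ → ℝ)
    (hf : Continuous fpar) (hF : Continuous Fperp) (hg : Continuous g)
    (um up : ℝ) (hne : um ≠ up)
    (hgum : g um = 0) (hgup : g up = 0)
    (σpar : ℝ) (hσpar : σpar = (fpar up - fpar um) / (up - um))
    (σperp : Fin n → ℝ) (hσperp : σperp = (up - um)⁻¹ • (Fperp up - Fperp um))
    (ψ0 : (Fin n → ℝ) → ℝ) (hψ0 : ContDiff ℝ 1 ψ0)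
    (u : ℝ → ℝ × (Fin n → ℝ) → ℝ)
    (hu : u = fun t p =>
      if p.1 - t * σpar < ψ0 (p.2 - t • σperp) then um else up) :
    ∀ φ : ℝ → ℝ × (Fin n → ℝ) → ℝ,
      ContDiff ℝ (⊤ : ℕ∞) (uncurry φ) →
      HasCompactSupport (uncurry φ) →
      tsupport (uncurry φ) ⊆ Ioi (0:ℝ) ×ˢ (univ : Set (ℝ × (Fin n → ℝ))) →
      (∫ q : ℝ × (ℝ × (Fin n → ℝ)),
        (u q.1 q.2 * deriv (fun s => φ s q.2) q.1
          + fderiv ℝ (fun p => φ q.1 p) q.2 (fpar (u q.1 q.2), Fperp (u q.1 q.2))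
          + g (u q.1 q.2) * φ q.1 q.2)) = 0 := by
  intro φ hφ hφc _hsupp
  have hupum : up - um ≠ 0 := sub_ne_zero.mpr (Ne.symm hne)
  set Φ : ℝ × (ℝ × (Fin n → ℝ)) → ℝ := uncurry φ with hΦdef
  have hΦ : ContDiff ℝ (⊤:ℕ∞) Φ := hφ
  have hdiff : Differentiable ℝ Φ := hΦ.differentiable (by simp)
  -- partial derivative identities
  have hderiv_t : ∀ q : ℝ × (ℝ × (Fin n → ℝ)),
      deriv (fun s => φ s q.2) q.1 = fderiv ℝ Φ q (1, 0) := by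
    intro q
    have h1 : HasDerivAt (fun s : ℝ => ((s, q.2) : ℝ × (ℝ × (Fin n → ℝ))))
        (1, (0 : ℝ × (Fin n → ℝ))) q.1 :=
      (hasDerivAt_id q.1).prodMk (hasDerivAt_const _ _)
    have h2 : HasDerivAt (fun s => φ s q.2) (fderiv ℝ Φ q (1, 0)) q.1 :=
      by have := (hdiff q).hasFDerivAt.comp_hasDerivAt q.1 h1; exact this
    exact h2.deriv
  have hderiv_x : ∀ (q : ℝ × (ℝ × (Fin n → ℝ))) (v : ℝ × (Fin n → ℝ)),
      fderiv ℝ (fun p => φ q.1 p) q.2 v = fderiv ℝ Φ q (0, v) := by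
    intro q v
    have h1 : HasFDerivAt (fun p : ℝ × (Fin n → ℝ) => ((q.1, p) : ℝ × (ℝ × (Fin n → ℝ))))
        ((0 : (ℝ × (Fin n → ℝ)) →L[ℝ] ℝ).prod (ContinuousLinearMap.id ℝ _)) q.2 :=
      (hasFDerivAt_const q.1 q.2).prodMk (hasFDerivAt_id q.2)
    have h2 : HasFDerivAt (fun p => φ q.1 p)
        ((fderiv ℝ Φ q).comp ((0 : (ℝ × (Fin n → ℝ)) →L[ℝ] ℝ).prod (ContinuousLinearMap.id ℝ _)))
        q.2 := by have := (hdiff q).hasFDerivAt.comp q.2 h1; exact this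
    rw [h2.fderiv]; rfl
  have hgz : ∀ (t : ℝ) (p : ℝ × (Fin n → ℝ)), g (u t p) = 0 := by
    intro t p; rw [hu]; dsimp only; split <;> assumption
  set Vm : ℝ × (ℝ × (Fin n → ℝ)) := (um, (fpar um, Fperp um)) with hVm
  set Vp : ℝ × (ℝ × (Fin n → ℝ)) := (up, (fpar up, Fperp up)) with hVp
  set e : ℝ × (ℝ × (Fin n → ℝ)) := (1, (σpar, σperp)) with he
  set Ω : Set (ℝ × (ℝ × (Fin n → ℝ))) :=
    {q | q.2.1 - q.1 * σpar < ψ0 (q.2.2 - q.1 • σperp)} with hΩ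
  have hΩopen : IsOpen Ω := by
    apply isOpen_lt
    · fun_prop
    · exact hψ0.continuous.comp (by fun_prop)
  have hΩmeas : MeasurableSet Ω := hΩopen.measurableSet
  -- pointwise rewriting of the integrand
  have hlin : ∀ (L : (ℝ × (ℝ × (Fin n → ℝ))) →L[ℝ] ℝ) (a : ℝ) (w : ℝ × (Fin n → ℝ)),
      a * L (1, 0) + L (0, w) = L (a, w) := by
    intro L a w
    have h : ((a, w) : ℝ × (ℝ × (Fin n → ℝ)))
        = a • ((1:ℝ), (0 : ℝ × (Fin n → ℝ))) + (0, w) := by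
      simp [Prod.ext_iff]
    rw [h, L.map_add, L.map_smul, smul_eq_mul]
  have hpoint : ∀ q : ℝ × (ℝ × (Fin n → ℝ)),
      u q.1 q.2 * deriv (fun s => φ s q.2) q.1
        + fderiv ℝ (fun p => φ q.1 p) q.2 (fpar (u q.1 q.2), Fperp (u q.1 q.2))
        + g (u q.1 q.2) * φ q.1 q.2
      = fderiv ℝ Φ q Vp + Set.indicator Ω (fun q => fderiv ℝ Φ q (Vm - Vp)) q := by
    intro q
    rw [hgz, zero_mul, add_zero, hderiv_t, hderiv_x, hlin]
    by_cases hq : q ∈ Ω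
    · rw [Set.indicator_of_mem hq]
      have hval : u q.1 q.2 = um := by rw [hu]; exact if_pos hq
      rw [hval, ← (fderiv ℝ Φ q).map_add]
      congr 1
      simp [hVm, hVp]
    · rw [Set.indicator_of_notMem hq, add_zero]
      have hval : u q.1 q.2 = up := by rw [hu]; exact if_neg hq
      rw [hval]
  -- integrability facts
  have hfd_cont : Continuous (fderiv ℝ Φ) := hΦ.continuous_fderiv (by simp)
  haveI hHaarE : (volume : Measure (ℝ × (Fin n → ℝ))).IsAddHaarMeasure :=
    Measure.prod.instIsAddHaarMeasure _ _
  haveI hHaarQ : (volume : Measure (ℝ × (ℝ × (Fin n → ℝ)))).IsAddHaarMeasure :=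
    Measure.prod.instIsAddHaarMeasure _ _
  have hfd_supp : HasCompactSupport (fderiv ℝ Φ) := hφc.fderiv (𝕜 := ℝ)
  have hint : ∀ v : ℝ × (ℝ × (Fin n → ℝ)),
      Integrable (fun q => fderiv ℝ Φ q v) (volume : Measure (ℝ × (ℝ × (Fin n → ℝ)))) := by
    intro v
    have hc2 : Continuous fun q => fderiv ℝ Φ q v := hfd_cont.clm_apply continuous_const
    have hs2 : HasCompactSupport fun q => fderiv ℝ Φ q v :=
      hfd_supp.comp_left (g := fun L : (ℝ × (ℝ × (Fin n → ℝ))) →L[ℝ] ℝ => L v) rfl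
    exact hc2.integrable_of_hasCompactSupport hs2
  have hint2 : Integrable
      (fun q => Set.indicator Ω (fun q => fderiv ℝ Φ q (Vm - Vp)) q)
      (volume : Measure (ℝ × (ℝ × (Fin n → ℝ)))) :=
    (hint (Vm - Vp)).indicator hΩmeas
  simp only [hpoint]
  rw [integral_add (hint Vp) hint2, auxA volume hΦ hφc Vp, zero_add]
  -- Rankine-Hugoniot
  have hRH : Vm - Vp = (um - up) • e := by
    have h1 : fpar um - fpar up = (um - up) * σpar := by
      rw [hσpar]; field_simp; try ring
    have h2 : Fperp um - Fperp up = (um - up) • σperp := by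
      rw [hσperp, smul_smul]
      have hc : (um - up) * (up - um)⁻¹ = -1 := by
        field_simp
        try ring
      rw [hc, neg_one_smul, neg_sub]
    simp only [hVm, hVp, he, Prod.mk_sub_mk, Prod.smul_mk, smul_eq_mul, mul_one, h1, h2]
  have hsmul : (fun q => Set.indicator Ω (fun q => fderiv ℝ Φ q (Vm - Vp)) q)
      = fun q => (um - up) • Set.indicator Ω (fun q => fderiv ℝ Φ q e) q := by
    funext q
    rw [hRH]
    by_cases hq : q ∈ Ω
    · rw [Set.indicator_of_mem hq, Set.indicator_of_mem hq, (fderiv ℝ Φ q).map_smul]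
    · rw [Set.indicator_of_notMem hq, Set.indicator_of_notMem hq, smul_zero]
  rw [hsmul, integral_smul]
  -- it remains to show the indicator integral vanishes
  suffices hmain : (∫ q : ℝ × (ℝ × (Fin n → ℝ)),
      Set.indicator Ω (fun q => fderiv ℝ Φ q e) q) = 0 by
    rw [hmain, smul_zero]
  -- the shear homeomorphism
  set T : (ℝ × (ℝ × (Fin n → ℝ))) ≃ₜ (ℝ × (ℝ × (Fin n → ℝ))) :=
    { toFun := fun q => (q.1, (q.2.1 + q.1 * σpar, q.2.2 + q.1 • σperp))
      invFun := fun q => (q.1, (q.2.1 - q.1 * σpar, q.2.2 - q.1 • σperp))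
      left_inv := fun q => by simp
      right_inv := fun q => by simp
      continuous_toFun := by fun_prop
      continuous_invFun := by fun_prop } with hT
  have hTmp : MeasurePreserving T (volume : Measure (ℝ × (ℝ × (Fin n → ℝ)))) volume := by
    rw [Measure.volume_eq_prod ℝ (ℝ × (Fin n → ℝ))]
    exact (MeasurePreserving.id volume).skew_product
      (g := fun (t : ℝ) (p : ℝ × (Fin n → ℝ)) => p + (t * σpar, t • σperp))
      (by fun_prop)
      (ae_of_all _ fun t =>
        (measurePreserving_add_right (volume : Measure (ℝ × (Fin n → ℝ)))
          ((t * σpar, t • σperp))).map_eq)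
  have hcomp := (hTmp.integral_comp T.measurableEmbedding
    (fun q => Set.indicator Ω (fun q => fderiv ℝ Φ q e) q)).symm
  rw [hcomp]
  set S : Set (ℝ × (Fin n → ℝ)) := {p | p.1 < ψ0 p.2} with hS
  have hTΩ : ∀ q : ℝ × (ℝ × (Fin n → ℝ)), T q ∈ Ω ↔ q.2 ∈ S := by
    intro q
    simp [hΩ, hT, hS]
  set c : (ℝ × (ℝ × (Fin n → ℝ))) → ℝ := fun q => fderiv ℝ Φ (T q) e with hc
  have hFeq : (fun q => Set.indicator Ω (fun q => fderiv ℝ Φ q e) (T q))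
      = Set.indicator ((univ : Set ℝ) ×ˢ S) c := by
    funext q
    by_cases h : q.2 ∈ S
    · rw [Set.indicator_of_mem ((hTΩ q).2 h), Set.indicator_of_mem (by simp [h])]
    · rw [Set.indicator_of_notMem (fun hh => h ((hTΩ q).1 hh)),
        Set.indicator_of_notMem (by simp [h])]
  rw [show (fun q => Set.indicator Ω (fun q => fderiv ℝ Φ q e) (T q)) = Set.indicator ((univ : Set ℝ) ×ˢ S) c from hFeq]
  have hSopen : IsOpen S := isOpen_lt continuous_fst (hψ0.continuous.comp continuous_snd)
  have hprodmeas : MeasurableSet ((univ : Set ℝ) ×ˢ S) :=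
    MeasurableSet.univ.prod hSopen.measurableSet
  have hccont : Continuous c := (hfd_cont.comp T.continuous).clm_apply continuous_const
  have hcsupp : HasCompactSupport c := by
    have : HasCompactSupport (fun q => fderiv ℝ Φ q e) :=
      hfd_supp.comp_left (g := fun L : (ℝ × (ℝ × (Fin n → ℝ))) →L[ℝ] ℝ => L e) rfl
    exact this.comp_homeomorph T
  have hFint : Integrable (Set.indicator ((univ : Set ℝ) ×ˢ S) c)
      ((volume : Measure ℝ).prod (volume : Measure (ℝ × (Fin n → ℝ)))) := by
    rw [← Measure.volume_eq_prod]
    exact (hccont.integrable_of_hasCompactSupport hcsupp).indicator hprodmeas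
  rw [Measure.volume_eq_prod ℝ (ℝ × (Fin n → ℝ)), integral_prod_symm _ hFint]
  have hinner : ∀ p : ℝ × (Fin n → ℝ),
      (∫ t : ℝ, Set.indicator ((univ : Set ℝ) ×ˢ S) c (t, p)) = 0 := by
    intro p
    by_cases hp : p ∈ S
    · have heqmem : ∀ t : ℝ, Set.indicator ((univ : Set ℝ) ×ˢ S) c (t, p) = c (t, p) :=
        fun t => Set.indicator_of_mem (by simp [hp]) _
      simp only [heqmem]
      -- the inner function is a full derivative
      set G : ℝ → ℝ := fun s => Φ (T (s, p)) with hG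
      have hγ : ∀ t : ℝ, HasDerivAt (fun s : ℝ => T (s, p)) e t := by
        intro t
        refine (hasDerivAt_id t).prodMk (HasDerivAt.prodMk ?_ ?_)
        · simpa using ((hasDerivAt_id t).mul_const σpar).const_add p.1
        · simpa using ((hasDerivAt_id t).smul_const σperp).const_add p.2
      have hGd : ∀ t : ℝ, HasDerivAt G (fderiv ℝ Φ (T (t, p)) e) t := fun t =>
        (hdiff _).hasFDerivAt.comp_hasDerivAt t (hγ t)
      have hcd : ∀ t : ℝ, c (t, p) = deriv G t := fun t => ((hGd t).deriv).symm
      simp only [hcd]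
      have hGsmooth : ContDiff ℝ (⊤:ℕ∞) G := by
        apply hΦ.comp
        show ContDiff ℝ ((⊤:ℕ∞) : WithTop ℕ∞)
          (fun s : ℝ => ((s, (p.1 + s * σpar, p.2 + s • σperp)) : ℝ × (ℝ × (Fin n → ℝ))))
        exact contDiff_id.prodMk ((contDiff_const.add (contDiff_id.mul contDiff_const)).prodMk
          (contDiff_const.add (contDiff_id.smul contDiff_const)))
      have hGsupp : HasCompactSupport G := by
        apply HasCompactSupport.intro (hφc.image continuous_fst)
        intro s hs
        by_contra h
        exact hs ⟨T (s, p), subset_tsupport _ (show T (s, p) ∈ support Φ from h), rfl⟩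
      exact auxB hGsmooth hGsupp
    · have heq0 : ∀ t : ℝ, Set.indicator ((univ : Set ℝ) ×ˢ S) c (t, p) = 0 :=
        fun t => Set.indicator_of_notMem (by simp [hp]) _
      simp only [heq0, integral_zero]
  simp only [hinner, integral_zero]
end

section
/- Let d ≥ 2, let f_∥, g : ℝ → ℝ and F_⊥ : ℝ → ℝ^{d−1} be C^1, let σ = (σ_∥, σ_⊥) ∈ ℝ×ℝ^{d−1}, and let T > 0. Let v : [0,T]×ℝ×ℝ^{d−1} → ℝ and Y : [0,T]×ℝ×ℝ^{d−1} → ℝ^{d−1} be C^1 with ∂_t v + (f_∥'(v) − σ_∥)·∂_x v = g(v) and ∂_t Y + (f_∥'(v) − σ_∥)·∂_x Y = F_⊥'(v) − σ_⊥ pointwise. Let u : [0,T]×ℝ^d → ℝ be C^1 and suppose u(t, x + t·σ_∥, Y(t,x,y) + t·σ_⊥) = v(t,x,y) for all (t,x,y). Then at every point of the form (t, x + t·σ_∥, Y(t,x,y) + t·σ_⊥), u satisfies ∂_t u + f_∥'(u)·∂_{x_1} u + F_⊥'(u)·∇_{x_⊥} u = g(u), i.e. u is a classical solution of the multidimensional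 balance law ∂_t u + div_𝐱(𝐅(u)) = g(u) with flux 𝐅 = (f_∥, F_⊥) at all such points. -/
open Filter Set


/-- **Reconstruction of multidimensional solutions from the shape and transverse-position
equations**: if `v` solves the one-dimensional shape equation
`∂_t v + (f_∥'(v) − σ_∥) ∂_x v = g(v)`, `Y` solves the affine transverse-position system
`∂_t Y + (f_∥'(v) − σ_∥) ∂_x Y = F_⊥'(v) − σ_⊥`, and the `C¹` function `u` satisfies
`u(t, x + tσ_∥, Y(t,x,y) + tσ_⊥) = v(t,x,y)`, then `u` is a classical solution of the
multidimensional balance law `∂_t u + f_∥'(u) ∂_{x₁} u + F_⊥'(u)·∇_{x_⊥} u = g(u)` at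
every point of the form `(t, x + tσ_∥, Y(t,x,y) + tσ_⊥)` with `t ∈ [0,T]`. -/
theorem stmt_19 (d : ℕ) (hd : 2 ≤ d) (n : ℕ) (hn : d = n + 1)
    (fpar g : ℝ → ℝ) (Fperp : ℝ → (Fin n → ℝ))
    (hf : ContDiff ℝ 1 fpar) (hg : ContDiff ℝ 1 g) (hF : ContDiff ℝ 1 Fperp)
    (σpar : ℝ) (σperp : Fin n → ℝ) (T : ℝ) (hT : 0 < T)
    (v : ℝ → ℝ → (Fin n → ℝ) → ℝ) (Y : ℝ → ℝ → (Fin n → ℝ) → (Fin n → ℝ))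
    (hvC1 : ContDiffOn ℝ 1 (fun q : ℝ × ℝ × (Fin n → ℝ) => v q.1 q.2.1 q.2.2)
      (Icc (0:ℝ) T ×ˢ (univ : Set (ℝ × (Fin n → ℝ)))))
    (hYC1 : ContDiffOn ℝ 1 (fun q : ℝ × ℝ × (Fin n → ℝ) => Y q.1 q.2.1 q.2.2)
      (Icc (0:ℝ) T ×ˢ (univ : Set (ℝ × (Fin n → ℝ)))))
    (hvpde : ∀ t ∈ Icc (0:ℝ) T, ∀ (x : ℝ) (y : Fin n → ℝ),
      derivWithin (fun s => v s x y) (Icc (0:ℝ) T) t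
        + (deriv fpar (v t x y) - σpar) * deriv (fun z => v t z y) x
        = g (v t x y))
    (hYpde : ∀ t ∈ Icc (0:ℝ) T, ∀ (x : ℝ) (y : Fin n → ℝ),
      derivWithin (fun s => Y s x y) (Icc (0:ℝ) T) t
        + (deriv fpar (v t x y) - σpar) • deriv (fun z => Y t z y) x
        = deriv Fperp (v t x y) - σperp)
    (u : ℝ → ℝ × (Fin n → ℝ) → ℝ)
    (huC1 : ContDiffOn ℝ 1 (fun q : ℝ × ℝ × (Fin n → ℝ) => u q.1 q.2)
      (Icc (0:ℝ) T ×ˢ (univ : Set (ℝ × (Fin n → ℝ)))))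
    (hcomp : ∀ t ∈ Icc (0:ℝ) T, ∀ (x : ℝ) (y : Fin n → ℝ),
      u t (x + t * σpar, Y t x y + t • σperp) = v t x y) :
    ∀ t ∈ Icc (0:ℝ) T, ∀ (x : ℝ) (y : Fin n → ℝ),
      derivWithin (fun s => u s (x + t * σpar, Y t x y + t • σperp)) (Icc (0:ℝ) T) t
        + deriv fpar (u t (x + t * σpar, Y t x y + t • σperp))
            * fderiv ℝ (u t) (x + t * σpar, Y t x y + t • σperp) (1, 0)
        + fderiv ℝ (u t) (x + t * σpar, Y t x y + t • σperp)
            (0, deriv Fperp (u t (x + t * σpar, Y t x y + t • σperp)))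
        = g (u t (x + t * σpar, Y t x y + t • σperp)) := by
  intro t ht x y
  set S : Set (ℝ × ℝ × (Fin n → ℝ)) := Icc (0:ℝ) T ×ˢ (univ : Set (ℝ × (Fin n → ℝ))) with hSdef
  have hIccU : UniqueDiffOn ℝ (Icc (0:ℝ) T) := uniqueDiffOn_Icc hT
  have hSu : UniqueDiffOn ℝ S := hIccU.prod uniqueDiffOn_univ
  set P : ℝ × (Fin n → ℝ) := (x + t * σpar, Y t x y + t • σperp) with hPdef
  have hq0 : ((t, P) : ℝ × ℝ × (Fin n → ℝ)) ∈ S := ⟨ht, mem_univ _⟩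
  have hq1 : ((t, x, y) : ℝ × ℝ × (Fin n → ℝ)) ∈ S := ⟨ht, mem_univ _⟩
  set U : ℝ × ℝ × (Fin n → ℝ) → ℝ := fun q => u q.1 q.2 with hUdef
  set Yt : ℝ × ℝ × (Fin n → ℝ) → (Fin n → ℝ) := fun q => Y q.1 q.2.1 q.2.2 with hYtdef
  set V : ℝ × ℝ × (Fin n → ℝ) → ℝ := fun q => v q.1 q.2.1 q.2.2 with hVdef
  set L := fderivWithin ℝ U S (t, P) with hLdef
  set M := fderivWithin ℝ Yt S (t, x, y) with hMdef
  set N := fderivWithin ℝ V S (t, x, y) with hNdef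
  have hU : HasFDerivWithinAt U L S (t, P) :=
    ((huC1.differentiableOn one_ne_zero) _ hq0).hasFDerivWithinAt
  have hM : HasFDerivWithinAt Yt M S (t, x, y) :=
    ((hYC1.differentiableOn one_ne_zero) _ hq1).hasFDerivWithinAt
  have hN : HasFDerivWithinAt V N S (t, x, y) :=
    ((hvC1.differentiableOn one_ne_zero) _ hq1).hasFDerivWithinAt
  -- time derivative of Y and v at fixed (x,y)
  have hφ : HasDerivWithinAt (fun s : ℝ => ((s, x, y) : ℝ × ℝ × (Fin n → ℝ)))
      ((1 : ℝ), (0 : ℝ), (0 : Fin n → ℝ)) (Icc (0:ℝ) T) t :=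
    HasDerivWithinAt.prodMk (hasDerivWithinAt_id t _) (hasDerivWithinAt_const t _ _)
  have hφmaps : MapsTo (fun s : ℝ => ((s, x, y) : ℝ × ℝ × (Fin n → ℝ)))
      (Icc (0:ℝ) T) S := fun s hs => ⟨hs, mem_univ _⟩
  have hYtime : HasDerivWithinAt (fun s => Y s x y) (M (1, 0, 0)) (Icc (0:ℝ) T) t :=
    by have := hM.comp_hasDerivWithinAt t hφ hφmaps; exact this
  have hVtime : HasDerivWithinAt (fun s => v s x y) (N (1, 0, 0)) (Icc (0:ℝ) T) t :=
    by have := hN.comp_hasDerivWithinAt t hφ hφmaps; exact this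
  -- x-derivative of Y and v
  have hψ : HasDerivWithinAt (fun z : ℝ => ((t, z, y) : ℝ × ℝ × (Fin n → ℝ)))
      ((0 : ℝ), (1 : ℝ), (0 : Fin n → ℝ)) (univ : Set ℝ) x :=
    HasDerivWithinAt.prodMk (hasDerivWithinAt_const x _ _)
      (HasDerivWithinAt.prodMk (hasDerivWithinAt_id x _) (hasDerivWithinAt_const x _ _))
  have hψmaps : MapsTo (fun z : ℝ => ((t, z, y) : ℝ × ℝ × (Fin n → ℝ)))
      (univ : Set ℝ) S := fun s _ => ⟨ht, mem_univ _⟩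
  have hYx : HasDerivAt (fun z => Y t z y) (M (0, 1, 0)) x := by
    rw [← hasDerivWithinAt_univ]
    exact hM.comp_hasDerivWithinAt x hψ hψmaps
  have hVx : HasDerivAt (fun z => v t z y) (N (0, 1, 0)) x := by
    rw [← hasDerivWithinAt_univ]
    exact hN.comp_hasDerivWithinAt x hψ hψmaps
  -- spatial fderiv of u t
  have hι : HasFDerivWithinAt (fun p : ℝ × (Fin n → ℝ) => ((t, p) : ℝ × ℝ × (Fin n → ℝ)))
      ((0 : (ℝ × (Fin n → ℝ)) →L[ℝ] ℝ).prod (ContinuousLinearMap.id ℝ _)) (univ) P :=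
    (HasFDerivAt.prodMk (hasFDerivAt_const t P) (hasFDerivAt_id P)).hasFDerivWithinAt
  have hιmaps : MapsTo (fun p : ℝ × (Fin n → ℝ) => ((t, p) : ℝ × ℝ × (Fin n → ℝ)))
      (univ : Set (ℝ × (Fin n → ℝ))) S := fun p _ => ⟨ht, mem_univ _⟩
  have hut : HasFDerivAt (u t)
      (L.comp ((0 : (ℝ × (Fin n → ℝ)) →L[ℝ] ℝ).prod (ContinuousLinearMap.id ℝ _))) P := by
    rw [← hasFDerivWithinAt_univ]
    exact hU.comp P hι hιmaps
  have hfderiv_u : fderiv ℝ (u t) P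
      = L.comp ((0 : (ℝ × (Fin n → ℝ)) →L[ℝ] ℝ).prod (ContinuousLinearMap.id ℝ _)) :=
    hut.fderiv
  -- pure time derivative of u at fixed point P
  have hγ : HasDerivWithinAt (fun s : ℝ => ((s, P) : ℝ × ℝ × (Fin n → ℝ)))
      ((1 : ℝ), (0 : ℝ × (Fin n → ℝ))) (Icc (0:ℝ) T) t :=
    HasDerivWithinAt.prodMk (hasDerivWithinAt_id t _) (hasDerivWithinAt_const t _ _)
  have hγmaps : MapsTo (fun s : ℝ => ((s, P) : ℝ × ℝ × (Fin n → ℝ))) (Icc (0:ℝ) T) S :=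
    fun s hs => ⟨hs, mem_univ _⟩
  have hutime : HasDerivWithinAt (fun s => u s P) (L (1, 0)) (Icc (0:ℝ) T) t :=
    by have := hU.comp_hasDerivWithinAt t hγ hγmaps; exact this
  -- composite time curve
  have hc1 : HasDerivWithinAt (fun s : ℝ => x + s * σpar) σpar (Icc (0:ℝ) T) t := by
    simpa using (((hasDerivAt_id t).mul_const σpar).const_add x).hasDerivWithinAt
  have hc2 : HasDerivWithinAt (fun s : ℝ => Y s x y + s • σperp)
      (M (1, 0, 0) + σperp) (Icc (0:ℝ) T) t := by
    have h2 : HasDerivAt (fun s : ℝ => s • σperp) σperp t := by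
      simpa using (hasDerivAt_id t).smul_const σperp
    exact hYtime.add h2.hasDerivWithinAt
  have hcurve : HasDerivWithinAt
      (fun s : ℝ => ((s, x + s * σpar, Y s x y + s • σperp) : ℝ × ℝ × (Fin n → ℝ)))
      ((1 : ℝ), σpar, M (1, 0, 0) + σperp) (Icc (0:ℝ) T) t :=
    HasDerivWithinAt.prodMk (hasDerivWithinAt_id t _) (HasDerivWithinAt.prodMk hc1 hc2)
  have hcurvemaps : MapsTo
      (fun s : ℝ => ((s, x + s * σpar, Y s x y + s • σperp) : ℝ × ℝ × (Fin n → ℝ)))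
      (Icc (0:ℝ) T) S := fun s hs => ⟨hs, mem_univ _⟩
  have hucomp : HasDerivWithinAt (fun s => u s (x + s * σpar, Y s x y + s • σperp))
      (L (1, σpar, M (1, 0, 0) + σperp)) (Icc (0:ℝ) T) t :=
    by have := hU.comp_hasDerivWithinAt t hcurve hcurvemaps; exact this
  have hvcomp : HasDerivWithinAt (fun s => v s x y)
      (L (1, σpar, M (1, 0, 0) + σperp)) (Icc (0:ℝ) T) t :=
    hucomp.congr (fun s hs => (hcomp s hs x y).symm) (hcomp t ht x y).symm
  have E1 : L (1, σpar, M (1, 0, 0) + σperp) = N (1, 0, 0) :=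
    (hvcomp.derivWithin (hIccU t ht)).symm.trans (hVtime.derivWithin (hIccU t ht))
  -- composite x curve
  have hd1 : HasDerivAt (fun z : ℝ => z + t * σpar) 1 x := (hasDerivAt_id x).add_const _
  have hd2 : HasDerivAt (fun z : ℝ => Y t z y + t • σperp) (M (0, 1, 0)) x :=
    hYx.add_const _
  have hxcurve : HasDerivWithinAt
      (fun z : ℝ => ((t, z + t * σpar, Y t z y + t • σperp) : ℝ × ℝ × (Fin n → ℝ)))
      ((0 : ℝ), (1 : ℝ), M (0, 1, 0)) (univ : Set ℝ) x :=
    HasDerivWithinAt.prodMk (hasDerivWithinAt_const x _ _) (HasDerivWithinAt.prodMk hd1.hasDerivWithinAt hd2.hasDerivWithinAt)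
  have hxmaps : MapsTo
      (fun z : ℝ => ((t, z + t * σpar, Y t z y + t • σperp) : ℝ × ℝ × (Fin n → ℝ)))
      (univ : Set ℝ) S := fun s _ => ⟨ht, mem_univ _⟩
  have huxcomp : HasDerivAt (fun z => u t (z + t * σpar, Y t z y + t • σperp))
      (L (0, 1, M (0, 1, 0))) x := by
    rw [← hasDerivWithinAt_univ]
    exact hU.comp_hasDerivWithinAt x hxcurve hxmaps
  have hvxcomp : HasDerivAt (fun z => v t z y) (L (0, 1, M (0, 1, 0))) x := by
    have he : (fun z => u t (z + t * σpar, Y t z y + t • σperp)) = fun z => v t z y :=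
      funext fun z => hcomp t ht z y
    rwa [he] at huxcomp
  have E2 : L (0, 1, M (0, 1, 0)) = N (0, 1, 0) := hvxcomp.deriv.symm.trans hVx.deriv
  -- linearity helpers
  have Lsplit : ∀ (a b : ℝ) (c : Fin n → ℝ),
      L (a, b, c) = a * L (1, 0, 0) + b * L (0, 1, 0) + L (0, 0, c) := by
    intro a b c
    have hv : ((a, b, c) : ℝ × ℝ × (Fin n → ℝ))
        = a • ((1:ℝ), (0:ℝ), (0 : Fin n → ℝ)) + b • ((0:ℝ), (1:ℝ), (0 : Fin n → ℝ))
          + ((0:ℝ), (0:ℝ), c) := by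
      simp [Prod.ext_iff]
    rw [hv, map_add, map_add, map_smul, map_smul, smul_eq_mul, smul_eq_mul]
  have Ladd : ∀ (c c' : Fin n → ℝ), L (0, 0, c + c') = L (0, 0, c) + L (0, 0, c') := by
    intro c c'
    have hv : ((0, 0, c + c') : ℝ × ℝ × (Fin n → ℝ)) = (0, 0, c) + (0, 0, c') := by
      simp [Prod.ext_iff]
    rw [hv, map_add]
  have Lsmul : ∀ (r : ℝ) (c : Fin n → ℝ), L (0, 0, r • c) = r * L (0, 0, c) := by
    intro r c
    have hv : ((0, 0, r • c) : ℝ × ℝ × (Fin n → ℝ)) = r • ((0, 0, c) : ℝ × ℝ × (Fin n → ℝ)) := by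
      simp [Prod.ext_iff]
    rw [hv, map_smul, smul_eq_mul]
  -- rewrite goal
  set a := deriv fpar (v t x y) with hadef
  have hYp := hYpde t ht x y
  have hvp := hvpde t ht x y
  rw [hYtime.derivWithin (hIccU t ht), hYx.deriv] at hYp
  rw [hVtime.derivWithin (hIccU t ht), hVx.deriv] at hvp
  have hFp : deriv Fperp (v t x y) = M (1, 0, 0) + (a - σpar) • M (0, 1, 0) + σperp := by
    have := hYp
    funext i
    have hi := congrFun this i
    simp only [Pi.add_apply, Pi.sub_apply, Pi.smul_apply] at hi ⊢
    linarith
  have hgoalpt : u t (x + t * σpar, Y t x y + t • σperp) = v t x y := hcomp t ht x y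
  rw [hgoalpt, hfderiv_u]
  rw [hutime.derivWithin (hIccU t ht)]
  have happ1 : (L.comp ((0 : (ℝ × (Fin n → ℝ)) →L[ℝ] ℝ).prod (ContinuousLinearMap.id ℝ _)))
      ((1 : ℝ), (0 : Fin n → ℝ)) = L (0, 1, 0) := by
    simp [ContinuousLinearMap.prod_apply]
  have happ2 : (L.comp ((0 : (ℝ × (Fin n → ℝ)) →L[ℝ] ℝ).prod (ContinuousLinearMap.id ℝ _)))
      ((0 : ℝ), deriv Fperp (v t x y)) = L (0, 0, deriv Fperp (v t x y)) := by
    simp [ContinuousLinearMap.prod_apply]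
  rw [happ1, happ2, hFp]
  have hLF : L (0, 0, M (1, 0, 0) + (a - σpar) • M (0, 1, 0) + σperp)
      = L (0, 0, M (1, 0, 0)) + (a - σpar) * L (0, 0, M (0, 1, 0)) + L (0, 0, σperp) := by
    rw [Ladd, Ladd, Lsmul]
  have hE1' : 1 * L (1, 0, 0) + σpar * L (0, 1, 0) + L (0, 0, M (1, 0, 0) + σperp)
      = N (1, 0, 0) := by
    have := E1
    rw [Lsplit] at this
    exact this
  have hE1'' : L (0, 0, M (1, 0, 0) + σperp) = L (0, 0, M (1, 0, 0)) + L (0, 0, σperp) :=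
    Ladd _ _
  have hE2' : 1 * L (0, 1, 0) + L (0, 0, M (0, 1, 0)) = N (0, 1, 0) := by
    have := E2
    rw [Lsplit] at this
    simpa using this
  have hL10 : L ((1 : ℝ), (0 : ℝ × (Fin n → ℝ))) = L (1, 0, 0) := rfl
  rw [hL10, hLF]
  have hgv : N (1, 0, 0) + (a - σpar) * N (0, 1, 0) = g (v t x y) := hvp
  linear_combination hE1' - hE1'' + (a - σpar) * hE2' + hgv
end
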